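/- arXiv:0806.0524 — 6 statements merged into one kernel-verified Lean document; each statement's English description precedes it below -/
import Mathlib

section
/- For every integer n ≥ 2, the 3×3×n rod can be tiled by trominoes. -/
/-- Standard basis vectors of `ℤ³`. -/
def e3 : Fin 3 → ℤ × ℤ × ℤ
  | 0 => (1, 0, 0)
  | 1 => (0, 1, 0)
  | 2 => (0, 0, 1)

/-- A 3D L-tromino: a cell together with two cells adjacent to it along two
different coordinate axes (equivalently, a translate/axis-rotation of
`{(0,0,0),(1,0,0),(0,1,0)}`). -/
def IsTromino3 (s : Finset (ℤ × ℤ × ℤ)) : Prop :=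
  ∃ (c : ℤ × ℤ × ℤ) (i j : Fin 3) (ε₁ ε₂ : ℤ), i ≠ j ∧
    (ε₁ = 1 ∨ ε₁ = -1) ∧ (ε₂ = 1 ∨ ε₂ = -1) ∧
    s = {c, c + ε₁ • e3 i, c + ε₂ • e3 j}

/-- The axis-aligned box `[0,a) × [0,b) × [0,c)` in `ℤ³`. -/
noncomputable def box (a b c : ℕ) : Finset (ℤ × ℤ × ℤ) :=
  (Finset.Ico (0 : ℤ) a) ×ˢ (Finset.Ico (0 : ℤ) b) ×ˢ (Finset.Ico (0 : ℤ) c)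

/-- `T` is a tiling of the region `R` by 3D trominoes: the trominoes are
pairwise disjoint and their union is exactly `R`. -/
def IsTiling3 (R : Finset (ℤ × ℤ × ℤ)) (T : Finset (Finset (ℤ × ℤ × ℤ))) : Prop :=
  (∀ t ∈ T, IsTromino3 t) ∧
    (∀ t₁ ∈ T, ∀ t₂ ∈ T, t₁ ≠ t₂ → Disjoint t₁ t₂) ∧
    (∀ x, x ∈ R ↔ ∃ t ∈ T, x ∈ t)

def T2 : Finset (Finset (ℤ × ℤ × ℤ)) :=
  {{(0,0,0), (0,1,0), (1,0,0)},
   {(0,0,1), (0,1,1), (1,0,1)},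
   {(0,2,0), (0,2,1), (1,2,0)},
   {(1,1,0), (1,1,1), (2,1,0)},
   {(1,2,1), (2,2,0), (2,2,1)},
   {(2,0,0), (2,0,1), (2,1,1)}}

lemma T2_trominoes : ∀ t ∈ T2, IsTromino3 t := by
  intro t ht
  simp only [T2, Finset.mem_insert, Finset.mem_singleton] at ht
  rcases ht with rfl|rfl|rfl|rfl|rfl|rfl
  · exact ⟨(0,0,0), 0, 1, 1, 1, by decide, Or.inl rfl, Or.inl rfl, by decide⟩
  · exact ⟨(0,0,1), 0, 1, 1, 1, by decide, Or.inl rfl, Or.inl rfl, by decide⟩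
  · exact ⟨(0,2,0), 0, 2, 1, 1, by decide, Or.inl rfl, Or.inl rfl, by decide⟩
  · exact ⟨(1,1,0), 0, 2, 1, 1, by decide, Or.inl rfl, Or.inl rfl, by decide⟩
  · exact ⟨(2,2,1), 0, 2, -1, -1, by decide, Or.inr rfl, Or.inr rfl, by decide⟩
  · exact ⟨(2,0,1), 1, 2, 1, -1, by decide, Or.inl rfl, Or.inr rfl, by decide⟩

def T3 : Finset (Finset (ℤ × ℤ × ℤ)) :=
  {{(0,0,0), (0,1,0), (1,0,0)},
   {(0,0,1), (0,0,2), (1,0,1)},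
   {(0,1,1), (0,2,1), (1,1,1)},
   {(0,1,2), (0,2,2), (1,1,2)},
   {(0,2,0), (1,1,0), (1,2,0)},
   {(1,0,2), (2,0,2), (2,1,2)},
   {(1,2,1), (1,2,2), (2,2,2)},
   {(2,0,0), (2,0,1), (2,1,0)},
   {(2,1,1), (2,2,0), (2,2,1)}}

lemma T3_trominoes : ∀ t ∈ T3, IsTromino3 t := by
  intro t ht
  simp only [T3, Finset.mem_insert, Finset.mem_singleton] at ht
  rcases ht with rfl|rfl|rfl|rfl|rfl|rfl|rfl|rfl|rfl
  · exact ⟨(0,0,0), 0, 1, 1, 1, by decide, Or.inl rfl, Or.inl rfl, by decide⟩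
  · exact ⟨(0,0,1), 0, 2, 1, 1, by decide, Or.inl rfl, Or.inl rfl, by decide⟩
  · exact ⟨(0,1,1), 0, 1, 1, 1, by decide, Or.inl rfl, Or.inl rfl, by decide⟩
  · exact ⟨(0,1,2), 0, 1, 1, 1, by decide, Or.inl rfl, Or.inl rfl, by decide⟩
  · exact ⟨(1,2,0), 0, 1, -1, -1, by decide, Or.inr rfl, Or.inr rfl, by decide⟩
  · exact ⟨(2,0,2), 0, 1, -1, 1, by decide, Or.inr rfl, Or.inl rfl, by decide⟩
  · exact ⟨(1,2,2), 0, 2, 1, -1, by decide, Or.inl rfl, Or.inr rfl, by decide⟩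
  · exact ⟨(2,0,0), 1, 2, 1, 1, by decide, Or.inl rfl, Or.inl rfl, by decide⟩
  · exact ⟨(2,2,1), 1, 2, -1, -1, by decide, Or.inr rfl, Or.inr rfl, by decide⟩


lemma T2_tiling : IsTiling3 (box 3 3 2) T2 := by
  refine ⟨T2_trominoes, by decide, ?_⟩
  have h : box 3 3 2 = T2.biUnion id := by decide
  intro x
  rw [h, Finset.mem_biUnion]
  rfl

lemma T3_tiling : IsTiling3 (box 3 3 3) T3 := by
  refine ⟨T3_trominoes, by decide, ?_⟩
  have h : box 3 3 3 = T3.biUnion id := by decide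
  intro x
  rw [h, Finset.mem_biUnion]
  rfl

/-- Shift a set of cells by a vector. -/
def shiftSet (v : ℤ × ℤ × ℤ) (s : Finset (ℤ × ℤ × ℤ)) : Finset (ℤ × ℤ × ℤ) :=
  s.image (· + v)

lemma mem_shiftSet {v : ℤ × ℤ × ℤ} {s : Finset (ℤ × ℤ × ℤ)} {x : ℤ × ℤ × ℤ} :
    x ∈ shiftSet v s ↔ x - v ∈ s := by
  simp only [shiftSet, Finset.mem_image]
  constructor
  · rintro ⟨a, ha, rfl⟩; simpa using ha
  · intro h; exact ⟨x - v, h, by simp⟩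

lemma IsTromino3.shift {s : Finset (ℤ × ℤ × ℤ)} (h : IsTromino3 s) (v : ℤ × ℤ × ℤ) :
    IsTromino3 (shiftSet v s) := by
  obtain ⟨c, i, j, e1, e2, hij, h1, h2, rfl⟩ := h
  refine ⟨c + v, i, j, e1, e2, hij, h1, h2, ?_⟩
  simp only [shiftSet, Finset.image_insert, Finset.image_singleton,
    add_right_comm c (e1 • e3 i) v, add_right_comm c (e2 • e3 j) v]

lemma mem_box_add (a b : ℕ) (x : ℤ × ℤ × ℤ) :
    x ∈ box 3 3 (a + b) ↔ x ∈ box 3 3 a ∨ x - ((0 : ℤ), (0 : ℤ), (a : ℤ)) ∈ box 3 3 b := by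
  obtain ⟨x1, x2, x3⟩ := x
  simp only [box, Finset.mem_product, Finset.mem_Ico, Prod.mk_sub_mk, sub_zero]
  push_cast
  omega

lemma glue {a b : ℕ} {T T' : Finset (Finset (ℤ × ℤ × ℤ))}
    (hT : IsTiling3 (box 3 3 a) T) (hT' : IsTiling3 (box 3 3 b) T') :
    IsTiling3 (box 3 3 (a + b)) (T ∪ T'.image (shiftSet ((0 : ℤ), (0 : ℤ), (a : ℤ)))) := by
  obtain ⟨hA1, hA2, hA3⟩ := hT
  obtain ⟨hB1, hB2, hB3⟩ := hT'
  set v : ℤ × ℤ × ℤ := ((0 : ℤ), (0 : ℤ), (a : ℤ)) with hv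
  have hzlt : ∀ x : ℤ × ℤ × ℤ, x ∈ box 3 3 a → x.2.2 < a := by
    rintro ⟨x1, x2, x3⟩ hx
    simp only [box, Finset.mem_product, Finset.mem_Ico] at hx
    exact hx.2.2.2
  have hzge : ∀ x : ℤ × ℤ × ℤ, x - v ∈ box 3 3 b → (a : ℤ) ≤ x.2.2 := by
    rintro ⟨x1, x2, x3⟩ hx
    simp only [hv, box, Finset.mem_product, Finset.mem_Ico, Prod.mk_sub_mk, sub_zero] at hx
    show (a : ℤ) ≤ x3
    omega
  have hsubA : ∀ t ∈ T, ∀ x ∈ t, x ∈ box 3 3 a :=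
    fun t ht x hx => (hA3 x).2 ⟨t, ht, hx⟩
  have hsubB : ∀ t ∈ T', ∀ x ∈ t, x ∈ box 3 3 b :=
    fun t ht x hx => (hB3 x).2 ⟨t, ht, hx⟩
  have hcross : ∀ t₁ ∈ T, ∀ t₂ ∈ T', Disjoint t₁ (shiftSet v t₂) := by
    intro t₁ h₁ t₂ h₂
    rw [Finset.disjoint_left]
    intro x hx hx'
    have h1 := hzlt x (hsubA t₁ h₁ x hx)
    have h2 := hzge x (hsubB t₂ h₂ _ (mem_shiftSet.1 hx'))
    omega
  refine ⟨?_, ?_, ?_⟩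
  · intro t ht
    rcases Finset.mem_union.1 ht with h | h
    · exact hA1 t h
    · obtain ⟨u, hu, rfl⟩ := Finset.mem_image.1 h
      exact (hB1 u hu).shift v
  · intro t₁ h₁ t₂ h₂ hne
    rcases Finset.mem_union.1 h₁ with h₁ | h₁ <;> rcases Finset.mem_union.1 h₂ with h₂ | h₂
    · exact hA2 t₁ h₁ t₂ h₂ hne
    · obtain ⟨u, hu, rfl⟩ := Finset.mem_image.1 h₂
      exact hcross t₁ h₁ u hu
    · obtain ⟨u, hu, rfl⟩ := Finset.mem_image.1 h₁
      exact (hcross t₂ h₂ u hu).symm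
    · obtain ⟨u₁, hu₁, rfl⟩ := Finset.mem_image.1 h₁
      obtain ⟨u₂, hu₂, rfl⟩ := Finset.mem_image.1 h₂
      have hne' : u₁ ≠ u₂ := by rintro rfl; exact hne rfl
      have hd := hB2 u₁ hu₁ u₂ hu₂ hne'
      rw [Finset.disjoint_left] at hd ⊢
      intro x hx hx'
      exact hd (mem_shiftSet.1 hx) (mem_shiftSet.1 hx')
  · intro x
    rw [mem_box_add]
    constructor
    · rintro (h | h)
      · obtain ⟨t, ht, hxt⟩ := (hA3 x).1 h
        exact ⟨t, Finset.mem_union_left _ ht, hxt⟩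
      · obtain ⟨t, ht, hxt⟩ := (hB3 _).1 h
        exact ⟨shiftSet v t, Finset.mem_union_right _ (Finset.mem_image_of_mem _ ht),
          mem_shiftSet.2 hxt⟩
    · rintro ⟨t, ht, hxt⟩
      rcases Finset.mem_union.1 ht with h | h
      · exact Or.inl (hsubA t h x hxt)
      · obtain ⟨u, hu, rfl⟩ := Finset.mem_image.1 h
        exact Or.inr (hsubB u hu _ (mem_shiftSet.1 hxt))

/-- For every integer `n ≥ 2`, the `3×3×n` rod can be tiled by trominoes. -/
theorem tile_rod_3_3_n (n : ℕ) (hn : 2 ≤ n) :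
    ∃ T : Finset (Finset (ℤ × ℤ × ℤ)), IsTiling3 (box 3 3 n) T := by
  induction n using Nat.strong_induction_on with
  | _ n ih =>
    obtain h2 | h3 | h4 : n = 2 ∨ n = 3 ∨ 4 ≤ n := by omega
    · subst h2; exact ⟨T2, T2_tiling⟩
    · subst h3; exact ⟨T3, T3_tiling⟩
    · obtain ⟨m, rfl⟩ : ∃ m, n = m + 2 + 2 := ⟨n - 4, by omega⟩
      obtain ⟨T, hT⟩ := ih (m + 2) (by omega) (by omega)
      exact ⟨_, glue hT T2_tiling⟩
end

section
/- For every positive integer n, the slab of dimensions 3×(3n+1)×(3n+1) can be tiled by trominoes. -/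
/-! ### Auxiliary machinery -/

def Tileable3 (R : Finset (ℤ × ℤ × ℤ)) : Prop := ∃ T, IsTiling3 R T

lemma tile_subset {R T} (h : IsTiling3 R T) {t} (ht : t ∈ T) : t ⊆ R :=
  fun x hx => (h.2.2 x).2 ⟨t, ht, hx⟩

lemma isTiling3_of_biUnion {R T} (h1 : ∀ t ∈ T, IsTromino3 t)
    (h2 : ∀ t₁ ∈ T, ∀ t₂ ∈ T, t₁ ≠ t₂ → Disjoint t₁ t₂)
    (h3 : R = T.biUnion id) : IsTiling3 R T :=
  ⟨h1, h2, fun x => by rw [h3]; simp⟩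

lemma tiling_union {R₁ R₂ T₁ T₂} (h₁ : IsTiling3 R₁ T₁) (h₂ : IsTiling3 R₂ T₂)
    (hd : Disjoint R₁ R₂) : IsTiling3 (R₁ ∪ R₂) (T₁ ∪ T₂) := by
  refine ⟨?_, ?_, ?_⟩
  · intro t ht
    rcases Finset.mem_union.1 ht with h | h
    · exact h₁.1 t h
    · exact h₂.1 t h
  · intro t₁ ht₁ t₂ ht₂ hne
    rcases Finset.mem_union.1 ht₁ with ha | ha <;> rcases Finset.mem_union.1 ht₂ with hb | hb
    · exact h₁.2.1 t₁ ha t₂ hb hne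
    · exact hd.mono (tile_subset h₁ ha) (tile_subset h₂ hb)
    · exact (hd.symm).mono (tile_subset h₂ ha) (tile_subset h₁ hb)
    · exact h₂.2.1 t₁ ha t₂ hb hne
  · intro x
    constructor
    · intro hx
      rcases Finset.mem_union.1 hx with hx | hx
      · obtain ⟨t, ht, hxt⟩ := (h₁.2.2 x).1 hx
        exact ⟨t, Finset.mem_union_left _ ht, hxt⟩
      · obtain ⟨t, ht, hxt⟩ := (h₂.2.2 x).1 hx
        exact ⟨t, Finset.mem_union_right _ ht, hxt⟩
    · rintro ⟨t, ht, hxt⟩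
      rcases Finset.mem_union.1 ht with h | h
      · exact Finset.mem_union_left _ ((h₁.2.2 x).2 ⟨t, h, hxt⟩)
      · exact Finset.mem_union_right _ ((h₂.2.2 x).2 ⟨t, h, hxt⟩)

lemma tileable_union {R₁ R₂} (h₁ : Tileable3 R₁) (h₂ : Tileable3 R₂)
    (hd : Disjoint R₁ R₂) : Tileable3 (R₁ ∪ R₂) := by
  obtain ⟨T₁, hT₁⟩ := h₁
  obtain ⟨T₂, hT₂⟩ := h₂
  exact ⟨T₁ ∪ T₂, tiling_union hT₁ hT₂ hd⟩

lemma tromino_translate (v : ℤ × ℤ × ℤ) {s} (h : IsTromino3 s) :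
    IsTromino3 (s.image (· + v)) := by
  obtain ⟨c, i, j, ε₁, ε₂, hij, h1, h2, rfl⟩ := h
  refine ⟨c + v, i, j, ε₁, ε₂, hij, h1, h2, ?_⟩
  simp only [Finset.image_insert, Finset.image_singleton]
  rw [add_right_comm c (ε₁ • e3 i) v, add_right_comm c (ε₂ • e3 j) v]

lemma tileable_translate (v : ℤ × ℤ × ℤ) {R} (h : Tileable3 R) :
    Tileable3 (R.image (· + v)) := by
  obtain ⟨T, h1, h2, h3⟩ := h
  have hinj : Function.Injective (fun x : ℤ × ℤ × ℤ => x + v) :=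
    fun a b hab => by simpa using hab
  refine ⟨T.image (Finset.image (· + v)), ?_, ?_, ?_⟩
  · intro t ht
    obtain ⟨u, hu, rfl⟩ := Finset.mem_image.1 ht
    exact tromino_translate v (h1 u hu)
  · intro t₁ ht₁ t₂ ht₂ hne
    obtain ⟨u₁, hu₁, rfl⟩ := Finset.mem_image.1 ht₁
    obtain ⟨u₂, hu₂, rfl⟩ := Finset.mem_image.1 ht₂
    have hne' : u₁ ≠ u₂ := by rintro rfl; exact hne rfl
    exact (Finset.disjoint_image hinj).2 (h2 u₁ hu₁ u₂ hu₂ hne')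
  · intro x
    constructor
    · intro hx
      obtain ⟨y, hy, rfl⟩ := Finset.mem_image.1 hx
      obtain ⟨t, ht, hyt⟩ := (h3 y).1 hy
      exact ⟨t.image (· + v), Finset.mem_image_of_mem _ ht,
        Finset.mem_image_of_mem _ hyt⟩
    · rintro ⟨t', ht', hxt'⟩
      obtain ⟨t, ht, rfl⟩ := Finset.mem_image.1 ht'
      obtain ⟨y, hyt, rfl⟩ := Finset.mem_image.1 hxt'
      exact Finset.mem_image_of_mem _ ((h3 y).2 ⟨t, ht, hyt⟩)

/-- The box `[0,3) × [y, y+b) × [z, z+c)`. -/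
noncomputable def pbox (y z : ℤ) (b c : ℕ) : Finset (ℤ × ℤ × ℤ) :=
  (box 3 b c).image (· + (0, y, z))

lemma mem_pbox {y z : ℤ} {b c : ℕ} {p : ℤ × ℤ × ℤ} :
    p ∈ pbox y z b c ↔ 0 ≤ p.1 ∧ p.1 < 3 ∧ y ≤ p.2.1 ∧ p.2.1 < y + b ∧
      z ≤ p.2.2 ∧ p.2.2 < z + c := by
  constructor
  · intro hp
    obtain ⟨q, hq, rfl⟩ := Finset.mem_image.1 hp
    simp only [box, Finset.mem_product, Finset.mem_Ico] at hq
    simp only [Prod.fst_add, Prod.snd_add]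
    push_cast at hq ⊢
    omega
  · intro h
    refine Finset.mem_image.2 ⟨(p.1, p.2.1 - y, p.2.2 - z), ?_, ?_⟩
    · simp only [box, Finset.mem_product, Finset.mem_Ico]
      push_cast
      omega
    · simp only [Prod.mk_add_mk, Prod.ext_iff]
      refine ⟨by ring, by ring, by ring⟩

lemma tileable_pbox_of_box {b c : ℕ} (h : Tileable3 (box 3 b c)) (y z : ℤ) :
    Tileable3 (pbox y z b c) := tileable_translate _ h

lemma pbox_translate (y z y' z' : ℤ) (b c : ℕ) :
    (pbox y z b c).image (· + (0, y', z')) = pbox (y + y') (z + z') b c := by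
  ext p
  simp only [Finset.mem_image]
  constructor
  · rintro ⟨q, hq, rfl⟩
    rw [mem_pbox] at hq ⊢
    simp only [Prod.fst_add, Prod.snd_add]
    omega
  · intro hp
    rw [mem_pbox] at hp
    refine ⟨p - (0, y', z'), ?_, by ring⟩
    rw [mem_pbox]
    simp only [Prod.fst_sub, Prod.snd_sub]
    omega

lemma tileable_pbox_mono {y z : ℤ} {b c : ℕ}
    (h : ∀ y' z' : ℤ, Tileable3 (pbox y' z' b c)) : Tileable3 (pbox y z b c) := h y z

lemma pbox_glue_b {b b₁ b₂ c : ℕ} {y z : ℤ} (hb : b = b₁ + b₂)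
    (h₁ : Tileable3 (pbox y z b₁ c)) (h₂ : Tileable3 (pbox (y + b₁) z b₂ c)) :
    Tileable3 (pbox y z b c) := by
  subst hb
  have hu : pbox y z (b₁ + b₂) c = pbox y z b₁ c ∪ pbox (y + b₁) z b₂ c := by
    ext p
    simp only [Finset.mem_union, mem_pbox]
    push_cast
    omega
  have hd : Disjoint (pbox y z b₁ c) (pbox (y + b₁) z b₂ c) := by
    rw [Finset.disjoint_left]
    intro p hp hp'
    rw [mem_pbox] at hp hp'
    omega
  rw [hu]
  exact tileable_union h₁ h₂ hd

lemma pbox_glue_c {b c c₁ c₂ : ℕ} {y z : ℤ} (hc : c = c₁ + c₂)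
    (h₁ : Tileable3 (pbox y z b c₁)) (h₂ : Tileable3 (pbox y (z + c₁) b c₂)) :
    Tileable3 (pbox y z b c) := by
  subst hc
  have hu : pbox y z b (c₁ + c₂) = pbox y z b c₁ ∪ pbox y (z + c₁) b c₂ := by
    ext p
    simp only [Finset.mem_union, mem_pbox]
    push_cast
    omega
  have hd : Disjoint (pbox y z b c₁) (pbox y (z + c₁) b c₂) := by
    rw [Finset.disjoint_left]
    intro p hp hp'
    rw [mem_pbox] at hp hp'
    omega
  rw [hu]
  exact tileable_union h₁ h₂ hd

/-! ### Base tilings -/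

lemma tileable_box321 : Tileable3 (box 3 2 1) := by
  refine ⟨{ {(0,0,0),(1,0,0),(0,1,0)}, {(2,1,0),(1,1,0),(2,0,0)} },
    isTiling3_of_biUnion ?_ (by decide) (by decide)⟩
  intro t ht
  simp only [Finset.mem_insert, Finset.mem_singleton] at ht
  rcases ht with rfl | rfl
  · exact ⟨(0,0,0), 0, 1, 1, 1, by decide, by decide, by decide, by decide⟩
  · exact ⟨(2,1,0), 0, 1, -1, -1, by decide, by decide, by decide, by decide⟩

lemma tileable_box312 : Tileable3 (box 3 1 2) := by
  refine ⟨{ {(0,0,0),(1,0,0),(0,0,1)}, {(2,0,1),(1,0,1),(2,0,0)} },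
    isTiling3_of_biUnion ?_ (by decide) (by decide)⟩
  intro t ht
  simp only [Finset.mem_insert, Finset.mem_singleton] at ht
  rcases ht with rfl | rfl
  · exact ⟨(0,0,0), 0, 2, 1, 1, by decide, by decide, by decide, by decide⟩
  · exact ⟨(2,0,1), 0, 2, -1, -1, by decide, by decide, by decide, by decide⟩

lemma tileable_box333 : Tileable3 (box 3 3 3) := by
  refine ⟨{ {(0,0,0),(1,0,0),(0,1,0)},
            {(0,0,1),(1,0,1),(0,0,2)},
            {(0,1,1),(1,1,1),(0,2,1)},
            {(0,1,2),(1,1,2),(0,2,2)},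
            {(1,2,0),(0,2,0),(1,1,0)},
            {(2,0,2),(1,0,2),(2,1,2)},
            {(1,2,2),(2,2,2),(1,2,1)},
            {(2,0,0),(2,1,0),(2,0,1)},
            {(2,2,1),(2,1,1),(2,2,0)} },
    isTiling3_of_biUnion ?_ (by decide) (by decide)⟩
  intro t ht
  simp only [Finset.mem_insert, Finset.mem_singleton] at ht
  rcases ht with rfl | rfl | rfl | rfl | rfl | rfl | rfl | rfl | rfl
  · exact ⟨(0,0,0), 0, 1, 1, 1, by decide, by decide, by decide, by decide⟩
  · exact ⟨(0,0,1), 0, 2, 1, 1, by decide, by decide, by decide, by decide⟩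
  · exact ⟨(0,1,1), 0, 1, 1, 1, by decide, by decide, by decide, by decide⟩
  · exact ⟨(0,1,2), 0, 1, 1, 1, by decide, by decide, by decide, by decide⟩
  · exact ⟨(1,2,0), 0, 1, -1, -1, by decide, by decide, by decide, by decide⟩
  · exact ⟨(2,0,2), 0, 1, -1, 1, by decide, by decide, by decide, by decide⟩
  · exact ⟨(1,2,2), 0, 2, 1, -1, by decide, by decide, by decide, by decide⟩
  · exact ⟨(2,0,0), 1, 2, 1, 1, by decide, by decide, by decide, by decide⟩
  · exact ⟨(2,2,1), 1, 2, -1, -1, by decide, by decide, by decide, by decide⟩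

/-! ### Small rectangles -/

lemma tp21 (y z : ℤ) : Tileable3 (pbox y z 2 1) := tileable_pbox_of_box tileable_box321 y z
lemma tp12 (y z : ℤ) : Tileable3 (pbox y z 1 2) := tileable_pbox_of_box tileable_box312 y z
lemma tp33 (y z : ℤ) : Tileable3 (pbox y z 3 3) := tileable_pbox_of_box tileable_box333 y z

lemma tp22 (y z : ℤ) : Tileable3 (pbox y z 2 2) :=
  pbox_glue_c rfl (tp21 y z) (tp21 y (z + 1))
lemma tp23 (y z : ℤ) : Tileable3 (pbox y z 2 3) :=
  pbox_glue_c (c₁ := 1) (c₂ := 2) rfl (tp21 y z) (tp22 y (z + 1))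
lemma tp24 (y z : ℤ) : Tileable3 (pbox y z 2 4) :=
  pbox_glue_c (c₁ := 2) (c₂ := 2) rfl (tp22 y z) (tp22 y (z + 2))
lemma tp44 (y z : ℤ) : Tileable3 (pbox y z 4 4) :=
  pbox_glue_b (b₁ := 2) (b₂ := 2) rfl (tp24 y z) (tp24 (y + 2) z)
lemma tp43 (y z : ℤ) : Tileable3 (pbox y z 4 3) :=
  pbox_glue_b (b₁ := 2) (b₂ := 2) rfl (tp23 y z) (tp23 (y + 2) z)
lemma tp32 (y z : ℤ) : Tileable3 (pbox y z 3 2) :=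
  pbox_glue_b (b₁ := 2) (b₂ := 1) rfl (tp22 y z) (tp12 (y + 2) z)
lemma tp34 (y z : ℤ) : Tileable3 (pbox y z 3 4) :=
  pbox_glue_c (c₁ := 2) (c₂ := 2) rfl (tp32 y z) (tp32 y (z + 2))

/-! ### Strips -/

lemma stripA (m : ℕ) : ∀ y z : ℤ, Tileable3 (pbox y z (3 * m + 4) 3) := by
  induction m with
  | zero =>
    intro y z
    rw [show 3 * 0 + 4 = 4 by norm_num]
    exact tp43 y z
  | succ k ih =>
    intro y z
    exact pbox_glue_b (b₁ := 3 * k + 4) (b₂ := 3) (by ring) (ih y z)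
      (tp33 (y + ((3 * k + 4 : ℕ) : ℤ)) z)

lemma stripB (m : ℕ) : ∀ y z : ℤ, Tileable3 (pbox y z 3 (3 * m + 4)) := by
  induction m with
  | zero =>
    intro y z
    rw [show 3 * 0 + 4 = 4 by norm_num]
    exact tp34 y z
  | succ k ih =>
    intro y z
    exact pbox_glue_c (c₁ := 3 * k + 4) (c₂ := 3) (by ring) (ih y z)
      (tp33 y (z + ((3 * k + 4 : ℕ) : ℤ)))

/-! ### Main induction -/

lemma main_square (n : ℕ) (hn : 1 ≤ n) :
    Tileable3 (pbox 0 0 (3 * n + 1) (3 * n + 1)) := by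
  induction n, hn using Nat.le_induction with
  | base =>
    rw [show 3 * 1 + 1 = 4 by norm_num]
    exact tp44 0 0
  | succ k hk ih =>
    refine pbox_glue_b (b₁ := 3 * k + 1) (b₂ := 3) (by ring) ?_ ?_
    · refine pbox_glue_c (c₁ := 3 * k + 1) (c₂ := 3) (by ring) ih ?_
      have h2 : 3 * k + 1 = 3 * (k - 1) + 4 := by omega
      rw [h2]
      exact stripA (k - 1) _ _
    · rw [show 3 * (k + 1) + 1 = 3 * k + 4 by ring]
      exact stripB k _ _

lemma box_eq_pbox (b c : ℕ) : box 3 b c = pbox 0 0 b c := by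
  ext p
  rw [mem_pbox]
  simp only [box, Finset.mem_product, Finset.mem_Ico]
  constructor
  · rintro ⟨⟨h1, h2⟩, ⟨h3, h4⟩, h5, h6⟩
    refine ⟨h1, by simpa using h2, h3, by simpa using h4, h5, by simpa using h6⟩
  · rintro ⟨h1, h2, h3, h4, h5, h6⟩
    exact ⟨⟨h1, by simpa using h2⟩, ⟨h3, by simpa using h4⟩, h5, by simpa using h6⟩

/-- For every positive integer `n`, the `3×(3n+1)×(3n+1)` slab can be tiled. -/
theorem tile_slab_one (n : ℕ) (hn : 0 < n) :
    ∃ T : Finset (Finset (ℤ × ℤ × ℤ)),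
      IsTiling3 (box 3 (3 * n + 1) (3 * n + 1)) T := by
  rw [box_eq_pbox]
  exact main_square n hn
end

section
/- For every positive integer n, the cube of side length 3n can be tiled by trominoes. -/
def t1 : Finset (ℤ × ℤ × ℤ) := {(0,0,0), (0,1,0), (1,0,0)}
def t2 : Finset (ℤ × ℤ × ℤ) := {(0,0,1), (0,0,2), (1,0,2)}
def t3 : Finset (ℤ × ℤ × ℤ) := {(0,1,1), (0,2,0), (0,2,1)}
def t4 : Finset (ℤ × ℤ × ℤ) := {(0,1,2), (0,2,2), (1,2,2)}
def t5 : Finset (ℤ × ℤ × ℤ) := {(1,0,1), (2,0,1), (2,0,2)}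
def t6 : Finset (ℤ × ℤ × ℤ) := {(1,1,0), (1,2,0), (2,2,0)}
def t7 : Finset (ℤ × ℤ × ℤ) := {(1,1,1), (1,2,1), (2,2,1)}
def t8 : Finset (ℤ × ℤ × ℤ) := {(1,1,2), (2,1,2), (2,2,2)}
def t9 : Finset (ℤ × ℤ × ℤ) := {(2,0,0), (2,1,0), (2,1,1)}

/-- The base tiling of the `3 × 3 × 3` cube. -/
def baseT : Finset (Finset (ℤ × ℤ × ℤ)) := {t1, t2, t3, t4, t5, t6, t7, t8, t9}

lemma ht1 : IsTromino3 t1 :=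
  ⟨(0,0,0), 0, 1, 1, 1, by decide, by norm_num, by norm_num, by decide⟩

lemma ht2 : IsTromino3 t2 :=
  ⟨(0,0,2), 0, 2, 1, -1, by decide, by norm_num, by norm_num, by decide⟩

lemma ht3 : IsTromino3 t3 :=
  ⟨(0,2,1), 1, 2, -1, -1, by decide, by norm_num, by norm_num, by decide⟩

lemma ht4 : IsTromino3 t4 :=
  ⟨(0,2,2), 0, 1, 1, -1, by decide, by norm_num, by norm_num, by decide⟩

lemma ht5 : IsTromino3 t5 :=
  ⟨(2,0,1), 0, 2, -1, 1, by decide, by norm_num, by norm_num, by decide⟩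

lemma ht6 : IsTromino3 t6 :=
  ⟨(1,2,0), 0, 1, 1, -1, by decide, by norm_num, by norm_num, by decide⟩

lemma ht7 : IsTromino3 t7 :=
  ⟨(1,2,1), 0, 1, 1, -1, by decide, by norm_num, by norm_num, by decide⟩

lemma ht8 : IsTromino3 t8 :=
  ⟨(2,1,2), 0, 1, -1, 1, by decide, by norm_num, by norm_num, by decide⟩

lemma ht9 : IsTromino3 t9 :=
  ⟨(2,1,0), 1, 2, -1, 1, by decide, by norm_num, by norm_num, by decide⟩

lemma base_tromino : ∀ t ∈ baseT, IsTromino3 t := by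
  intro t ht
  simp only [baseT, Finset.mem_insert, Finset.mem_singleton] at ht
  rcases ht with h|h|h|h|h|h|h|h|h <;> subst h
  exacts [ht1, ht2, ht3, ht4, ht5, ht6, ht7, ht8, ht9]

lemma base_disj : ∀ t₁ ∈ baseT, ∀ t₂ ∈ baseT, t₁ ≠ t₂ → Disjoint t₁ t₂ := by
  have h : ∀ t₁ ∈ baseT, ∀ t₂ ∈ baseT, t₁ ≠ t₂ → t₁ ∩ t₂ = ∅ := by decide
  intro a ha b hb hab
  rw [Finset.disjoint_iff_inter_eq_empty]
  exact h a ha b hb hab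

lemma base_cover : box 3 3 3 = baseT.biUnion id := by decide

lemma base_sub : ∀ t ∈ baseT, t ⊆ box 3 3 3 := by decide

/-- Translate a finset of cells. -/
def shift (v : ℤ × ℤ × ℤ) (s : Finset (ℤ × ℤ × ℤ)) : Finset (ℤ × ℤ × ℤ) :=
  s.image (· + v)

lemma mem_shift {v x : ℤ × ℤ × ℤ} {s : Finset (ℤ × ℤ × ℤ)} :
    x ∈ shift v s ↔ x - v ∈ s := by
  simp only [shift, Finset.mem_image]
  constructor
  · rintro ⟨a, ha, rfl⟩; simpa using ha
  · intro h; exact ⟨x - v, h, by ring⟩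

lemma shift_tromino (v : ℤ × ℤ × ℤ) {s : Finset (ℤ × ℤ × ℤ)} (hs : IsTromino3 s) :
    IsTromino3 (shift v s) := by
  obtain ⟨c, i, j, ε₁, ε₂, hij, hε₁, hε₂, rfl⟩ := hs
  refine ⟨c + v, i, j, ε₁, ε₂, hij, hε₁, hε₂, ?_⟩
  simp only [shift, Finset.image_insert, Finset.image_singleton]
  congr 2 <;> ring

lemma mem_box {a b c : ℕ} {x : ℤ × ℤ × ℤ} :
    x ∈ box a b c ↔ 0 ≤ x.1 ∧ x.1 < a ∧ 0 ≤ x.2.1 ∧ x.2.1 < b ∧ 0 ≤ x.2.2 ∧ x.2.2 < c := by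
  simp only [box, Finset.mem_product, Finset.mem_Ico]
  tauto

/-- For every positive integer `n`, the cube of side `3n` can be tiled by trominoes. -/
theorem tile_cube_three_n (n : ℕ) (hn : 0 < n) :
    ∃ T : Finset (Finset (ℤ × ℤ × ℤ)), IsTiling3 (box (3 * n) (3 * n) (3 * n)) T := by
  classical
  set B := (Finset.range n ×ˢ Finset.range n ×ˢ Finset.range n) ×ˢ baseT with hB
  refine ⟨B.image (fun p => shift (3 * (p.1.1 : ℤ), 3 * (p.1.2.1 : ℤ), 3 * (p.1.2.2 : ℤ)) p.2),
    ?_, ?_, ?_⟩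
  · rintro t ht
    simp only [Finset.mem_image] at ht
    obtain ⟨⟨⟨a, b, c⟩, s⟩, hp, rfl⟩ := ht
    simp only [hB, Finset.mem_product] at hp
    exact shift_tromino _ (base_tromino s hp.2)
  · rintro u hu w hw huw
    simp only [Finset.mem_image] at hu hw
    obtain ⟨⟨⟨a, b, c⟩, s⟩, hp, rfl⟩ := hu
    obtain ⟨⟨⟨a', b', c'⟩, s'⟩, hq, rfl⟩ := hw
    simp only [hB, Finset.mem_product, Finset.mem_range] at hp hq
    by_cases hv : (a, b, c) = (a', b', c')
    · obtain ⟨rfl, rfl, rfl⟩ := Prod.mk.injEq .. ▸ (by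
        simp only [Prod.mk.injEq] at hv; exact ⟨hv.1, hv.2.1, hv.2.2⟩ :
        a = a' ∧ b = b' ∧ c = c')
      have hss : s ≠ s' := fun h => huw (by rw [h])
      rw [Finset.disjoint_left]
      intro x hx hx'
      rw [mem_shift] at hx hx'
      exact Finset.disjoint_left.mp (base_disj s hp.2 s' hq.2 hss) hx hx'
    · rw [Finset.disjoint_left]
      intro x hx hx'
      rw [mem_shift] at hx hx'
      have h1 := mem_box.mp (base_sub s hp.2 hx)
      have h2 := mem_box.mp (base_sub s' hq.2 hx')
      simp only [Prod.fst_sub, Prod.snd_sub] at h1 h2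
      apply hv
      have : (a : ℤ) = a' ∧ (b : ℤ) = b' ∧ (c : ℤ) = c' := by
        constructor
        · omega
        constructor <;> omega
      simp only [Prod.mk.injEq]
      exact ⟨by exact_mod_cast this.1, by exact_mod_cast this.2.1, by exact_mod_cast this.2.2⟩
  · intro x
    constructor
    · intro hx
      have hx' := mem_box.mp hx
      push_cast at hx'
      set a := x.1 / 3 with ha
      set b := x.2.1 / 3 with hbb
      set c := x.2.2 / 3 with hc
      have e1 := Int.mul_ediv_add_emod x.1 3
      have e2 := Int.mul_ediv_add_emod x.2.1 3
      have e3 := Int.mul_ediv_add_emod x.2.2 3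
      have m1 := Int.emod_nonneg x.1 (by norm_num : (3:ℤ) ≠ 0)
      have m2 := Int.emod_nonneg x.2.1 (by norm_num : (3:ℤ) ≠ 0)
      have m3 := Int.emod_nonneg x.2.2 (by norm_num : (3:ℤ) ≠ 0)
      have l1 := Int.emod_lt_of_pos x.1 (by norm_num : (0:ℤ) < 3)
      have l2 := Int.emod_lt_of_pos x.2.1 (by norm_num : (0:ℤ) < 3)
      have l3 := Int.emod_lt_of_pos x.2.2 (by norm_num : (0:ℤ) < 3)
      have ha0 : 0 ≤ a := by omega
      have hb0 : 0 ≤ b := by omega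
      have hc0 : 0 ≤ c := by omega
      have han : a < n := by omega
      have hbn : b < n := by omega
      have hcn : c < n := by omega
      have hr : x - (3 * a, 3 * b, 3 * c) ∈ box 3 3 3 := by
        rw [mem_box]
        simp only [Prod.fst_sub, Prod.snd_sub]
        push_cast
        omega
      rw [base_cover, Finset.mem_biUnion] at hr
      obtain ⟨t, ht, hxt⟩ := hr
      refine ⟨shift (3 * a, 3 * b, 3 * c) t, ?_, mem_shift.mpr hxt⟩
      rw [Finset.mem_image]
      refine ⟨((a.toNat, b.toNat, c.toNat), t), ?_, ?_⟩
      · simp only [hB, Finset.mem_product, Finset.mem_range]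
        exact ⟨⟨by omega, by omega, by omega⟩, ht⟩
      · simp only
        congr 2 <;> [skip; congr 1] <;> push_cast <;> omega
    · intro ⟨t, ht, hxt⟩
      simp only [Finset.mem_image] at ht
      obtain ⟨⟨⟨a, b, c⟩, s⟩, hp, rfl⟩ := ht
      simp only [hB, Finset.mem_product, Finset.mem_range] at hp
      rw [mem_shift] at hxt
      have h1 := mem_box.mp (base_sub s hp.2 hxt)
      simp only [Prod.fst_sub, Prod.snd_sub] at h1
      rw [mem_box]
      push_cast
      obtain ⟨⟨han, hbn, hcn⟩, -⟩ := hp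
      constructor; · omega
      refine ⟨by omega, by omega, by omega, by omega, by omega⟩
end

section
/- For every nonnegative integer k and every cell c of the 2^k × 2^k grid, the grid with c removed can be tiled by planar L-trominoes. -/
/-- A planar L-tromino: a cell together with two cells adjacent to it along
the two coordinate axes (a translate/rotation of `{(0,0),(1,0),(0,1)}`). -/
def IsTromino2 (s : Finset (ℤ × ℤ)) : Prop :=
  ∃ (c : ℤ × ℤ) (ε₁ ε₂ : ℤ),
    (ε₁ = 1 ∨ ε₁ = -1) ∧ (ε₂ = 1 ∨ ε₂ = -1) ∧
    s = {c, c + (ε₁, 0), c + (0, ε₂)}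

/-- The grid `[0,a) × [0,b)` in `ℤ²`. -/
noncomputable def grid (a b : ℕ) : Finset (ℤ × ℤ) :=
  (Finset.Ico (0 : ℤ) a) ×ˢ (Finset.Ico (0 : ℤ) b)

/-- `T` is a tiling of the region `R` by planar trominoes. -/
def IsTiling2 (R : Finset (ℤ × ℤ)) (T : Finset (Finset (ℤ × ℤ))) : Prop :=
  (∀ t ∈ T, IsTromino2 t) ∧
    (∀ t₁ ∈ T, ∀ t₂ ∈ T, t₁ ≠ t₂ → Disjoint t₁ t₂) ∧
    (∀ x, x ∈ R ↔ ∃ t ∈ T, x ∈ t)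

/-- A translated square `[v₁, v₁+n) × [v₂, v₂+n)`. -/
noncomputable def sqg (n : ℤ) (v : ℤ × ℤ) : Finset (ℤ × ℤ) :=
  (Finset.Ico v.1 (v.1 + n)) ×ˢ (Finset.Ico v.2 (v.2 + n))

lemma mem_sqg {n : ℤ} {v x : ℤ × ℤ} :
    x ∈ sqg n v ↔ v.1 ≤ x.1 ∧ x.1 < v.1 + n ∧ v.2 ≤ x.2 ∧ x.2 < v.2 + n := by
  simp [sqg, Finset.mem_product, Finset.mem_Ico, and_assoc]

lemma tiling_subset {R : Finset (ℤ × ℤ)} {T : Finset (Finset (ℤ × ℤ))}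
    (h : IsTiling2 R T) {t : Finset (ℤ × ℤ)} (ht : t ∈ T) : t ⊆ R :=
  fun x hx => (h.2.2 x).2 ⟨t, ht, hx⟩

lemma tiling_union_s12 {R R' : Finset (ℤ × ℤ)} {T T' : Finset (Finset (ℤ × ℤ))}
    (h : IsTiling2 R T) (h' : IsTiling2 R' T') (hd : Disjoint R R') :
    IsTiling2 (R ∪ R') (T ∪ T') := by
  refine ⟨?_, ?_, ?_⟩
  · intro t ht
    rcases Finset.mem_union.1 ht with ht | ht
    · exact h.1 t ht
    · exact h'.1 t ht
  · intro t₁ ht₁ t₂ ht₂ hne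
    rcases Finset.mem_union.1 ht₁ with h₁ | h₁ <;> rcases Finset.mem_union.1 ht₂ with h₂ | h₂
    · exact h.2.1 t₁ h₁ t₂ h₂ hne
    · exact hd.mono (tiling_subset h h₁) (tiling_subset h' h₂)
    · exact hd.symm.mono (tiling_subset h' h₁) (tiling_subset h h₂)
    · exact h'.2.1 t₁ h₁ t₂ h₂ hne
  · intro x
    rw [Finset.mem_union]
    constructor
    · rintro (hx | hx)
      · obtain ⟨t, ht, hxt⟩ := (h.2.2 x).1 hx
        exact ⟨t, Finset.mem_union_left _ ht, hxt⟩
      · obtain ⟨t, ht, hxt⟩ := (h'.2.2 x).1 hx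
        exact ⟨t, Finset.mem_union_right _ ht, hxt⟩
    · rintro ⟨t, ht, hxt⟩
      rcases Finset.mem_union.1 ht with ht' | ht'
      · exact Or.inl ((h.2.2 x).2 ⟨t, ht', hxt⟩)
      · exact Or.inr ((h'.2.2 x).2 ⟨t, ht', hxt⟩)

lemma tiling_single {s : Finset (ℤ × ℤ)} (h : IsTromino2 s) : IsTiling2 s {s} := by
  refine ⟨?_, ?_, ?_⟩
  · intro t ht; rw [Finset.mem_singleton] at ht; subst ht; exact h
  · intro t₁ ht₁ t₂ ht₂ hne
    rw [Finset.mem_singleton] at ht₁ ht₂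
    exact absurd (ht₁.trans ht₂.symm) hne
  · intro x; simp

/-- Glue four quadrant tilings with a central tromino. -/
lemma glue_s12 {Q₁ Q₂ Q₃ Q₄ : Finset (ℤ × ℤ)} {c a₂ a₃ a₄ : ℤ × ℤ}
    {R : Finset (ℤ × ℤ)}
    (hR : ∀ x, x ∈ R ↔ x ∈ Q₁ ∨ x ∈ Q₂ ∨ x ∈ Q₃ ∨ x ∈ Q₄)
    (d12 : Disjoint Q₁ Q₂) (d13 : Disjoint Q₁ Q₃) (d14 : Disjoint Q₁ Q₄)
    (d23 : Disjoint Q₂ Q₃) (d24 : Disjoint Q₂ Q₄) (d34 : Disjoint Q₃ Q₄)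
    (hc : c ∈ Q₁) (h2 : a₂ ∈ Q₂) (h3 : a₃ ∈ Q₃) (h4 : a₄ ∈ Q₄)
    (htrom : IsTromino2 {a₂, a₃, a₄})
    {T₁ T₂ T₃ T₄ : Finset (Finset (ℤ × ℤ))}
    (H1 : IsTiling2 (Q₁.erase c) T₁) (H2 : IsTiling2 (Q₂.erase a₂) T₂)
    (H3 : IsTiling2 (Q₃.erase a₃) T₃) (H4 : IsTiling2 (Q₄.erase a₄) T₄) :
    ∃ T, IsTiling2 (R.erase c) T := by
  have hc2 : c ∉ Q₂ := Finset.disjoint_left.mp d12 hc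
  have hc3 : c ∉ Q₃ := Finset.disjoint_left.mp d13 hc
  have hc4 : c ∉ Q₄ := Finset.disjoint_left.mp d14 hc
  have ha21 : a₂ ∉ Q₁ := Finset.disjoint_right.mp d12 h2
  have ha23 : a₂ ∉ Q₃ := Finset.disjoint_left.mp d23 h2
  have ha24 : a₂ ∉ Q₄ := Finset.disjoint_left.mp d24 h2
  have ha31 : a₃ ∉ Q₁ := Finset.disjoint_right.mp d13 h3
  have ha32 : a₃ ∉ Q₂ := Finset.disjoint_right.mp d23 h3
  have ha34 : a₃ ∉ Q₄ := Finset.disjoint_left.mp d34 h3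
  have ha41 : a₄ ∉ Q₁ := Finset.disjoint_right.mp d14 h4
  have ha42 : a₄ ∉ Q₂ := Finset.disjoint_right.mp d24 h4
  have ha43 : a₄ ∉ Q₃ := Finset.disjoint_right.mp d34 h4
  have e : R.erase c =
      (((Q₁.erase c ∪ Q₂.erase a₂) ∪ Q₃.erase a₃) ∪ Q₄.erase a₄) ∪ ({a₂, a₃, a₄} : Finset (ℤ × ℤ)) := by
    ext x
    simp only [Finset.mem_erase, Finset.mem_union, Finset.mem_insert, Finset.mem_singleton, hR x]
    constructor
    · rintro ⟨hxc, hx | hx | hx | hx⟩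
      · exact Or.inl (Or.inl (Or.inl (Or.inl ⟨hxc, hx⟩)))
      · by_cases h : x = a₂
        · exact Or.inr (Or.inl h)
        · exact Or.inl (Or.inl (Or.inl (Or.inr ⟨h, hx⟩)))
      · by_cases h : x = a₃
        · exact Or.inr (Or.inr (Or.inl h))
        · exact Or.inl (Or.inl (Or.inr ⟨h, hx⟩))
      · by_cases h : x = a₄
        · exact Or.inr (Or.inr (Or.inr h))
        · exact Or.inl (Or.inr ⟨h, hx⟩)
    · rintro ((((⟨h', hx⟩ | ⟨h', hx⟩) | ⟨h', hx⟩) | ⟨h', hx⟩) | h' | h' | h')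
      · exact ⟨h', Or.inl hx⟩
      · exact ⟨fun h => hc2 (h ▸ hx), Or.inr (Or.inl hx)⟩
      · exact ⟨fun h => hc3 (h ▸ hx), Or.inr (Or.inr (Or.inl hx))⟩
      · exact ⟨fun h => hc4 (h ▸ hx), Or.inr (Or.inr (Or.inr hx))⟩
      · subst h'; exact ⟨fun h => hc2 (h ▸ h2), Or.inr (Or.inl h2)⟩
      · subst h'; exact ⟨fun h => hc3 (h ▸ h3), Or.inr (Or.inr (Or.inl h3))⟩
      · subst h'; exact ⟨fun h => hc4 (h ▸ h4), Or.inr (Or.inr (Or.inr h4))⟩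
  rw [e]
  refine ⟨(((T₁ ∪ T₂) ∪ T₃) ∪ T₄) ∪ {({a₂, a₃, a₄} : Finset (ℤ × ℤ))}, ?_⟩
  have d12' : Disjoint (Q₁.erase c) (Q₂.erase a₂) :=
    d12.mono (Finset.erase_subset _ _) (Finset.erase_subset _ _)
  have h12 := tiling_union_s12 H1 H2 d12'
  have d3' : Disjoint (Q₁.erase c ∪ Q₂.erase a₂) (Q₃.erase a₃) := by
    refine Finset.disjoint_union_left.mpr ⟨?_, ?_⟩
    · exact d13.mono (Finset.erase_subset _ _) (Finset.erase_subset _ _)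
    · exact d23.mono (Finset.erase_subset _ _) (Finset.erase_subset _ _)
  have h123 := tiling_union_s12 h12 H3 d3'
  have d4' : Disjoint ((Q₁.erase c ∪ Q₂.erase a₂) ∪ Q₃.erase a₃) (Q₄.erase a₄) := by
    refine Finset.disjoint_union_left.mpr ⟨Finset.disjoint_union_left.mpr ⟨?_, ?_⟩, ?_⟩
    · exact d14.mono (Finset.erase_subset _ _) (Finset.erase_subset _ _)
    · exact d24.mono (Finset.erase_subset _ _) (Finset.erase_subset _ _)
    · exact d34.mono (Finset.erase_subset _ _) (Finset.erase_subset _ _)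
  have h1234 := tiling_union_s12 h123 H4 d4'
  have dcen : Disjoint (((Q₁.erase c ∪ Q₂.erase a₂) ∪ Q₃.erase a₃) ∪ Q₄.erase a₄)
      ({a₂, a₃, a₄} : Finset (ℤ × ℤ)) := by
    rw [Finset.disjoint_right]
    intro x hx
    simp only [Finset.mem_insert, Finset.mem_singleton] at hx
    simp only [Finset.mem_union, Finset.mem_erase, not_or]
    rcases hx with rfl | rfl | rfl
    · exact ⟨⟨⟨fun h => ha21 h.2, fun h => (h.1 rfl)⟩, fun h => ha23 h.2⟩, fun h => ha24 h.2⟩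
    · exact ⟨⟨⟨fun h => ha31 h.2, fun h => ha32 h.2⟩, fun h => (h.1 rfl)⟩, fun h => ha34 h.2⟩
    · exact ⟨⟨⟨fun h => ha41 h.2, fun h => ha42 h.2⟩, fun h => ha43 h.2⟩, fun h => (h.1 rfl)⟩
  exact tiling_union_s12 h1234 (tiling_single htrom) dcen

lemma or_perm2 {a b c d : Prop} : (a ∨ b ∨ c ∨ d) ↔ (b ∨ a ∨ c ∨ d) := by tauto
lemma or_perm3 {a b c d : Prop} : (a ∨ b ∨ c ∨ d) ↔ (c ∨ a ∨ b ∨ d) := by tauto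
lemma or_perm4 {a b c d : Prop} : (a ∨ b ∨ c ∨ d) ↔ (d ∨ a ∨ b ∨ c) := by tauto

lemma sqg_tiling : ∀ k : ℕ, ∀ v c : ℤ × ℤ, c ∈ sqg (2 ^ k) v →
    ∃ T, IsTiling2 ((sqg ((2 : ℤ) ^ k) v).erase c) T := by
  intro k
  induction k with
  | zero =>
    intro v c hc
    rw [pow_zero] at hc ⊢
    rw [mem_sqg] at hc
    refine ⟨∅, by simp, by simp, fun x => ?_⟩
    constructor
    · intro hx
      rw [Finset.mem_erase, mem_sqg] at hx
      exact absurd (Prod.ext (by omega) (by omega) : x = c) hx.1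
    · rintro ⟨t, ht, -⟩
      exact absurd ht (Finset.notMem_empty t)
  | succ k IH =>
    intro v c hc
    set n : ℤ := (2 : ℤ) ^ k with hn
    have hnpos : 0 < n := by positivity
    have hpow : (2 : ℤ) ^ (k + 1) = 2 * n := by rw [hn]; ring
    rw [hpow] at hc ⊢
    set Q₁ := sqg n v with hQ1
    set Q₂ := sqg n (v.1 + n, v.2) with hQ2
    set Q₃ := sqg n (v.1, v.2 + n) with hQ3
    set Q₄ := sqg n (v.1 + n, v.2 + n) with hQ4
    have hsplit : ∀ x : ℤ × ℤ, x ∈ sqg (2 * n) v ↔ x ∈ Q₁ ∨ x ∈ Q₂ ∨ x ∈ Q₃ ∨ x ∈ Q₄ := by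
      intro x; simp only [hQ1, hQ2, hQ3, hQ4, mem_sqg]; omega
    have d12 : Disjoint Q₁ Q₂ := by
      rw [Finset.disjoint_left]; intro x h1 h2
      rw [hQ1, mem_sqg] at h1; rw [hQ2, mem_sqg] at h2; omega
    have d13 : Disjoint Q₁ Q₃ := by
      rw [Finset.disjoint_left]; intro x h1 h2
      rw [hQ1, mem_sqg] at h1; rw [hQ3, mem_sqg] at h2; omega
    have d14 : Disjoint Q₁ Q₄ := by
      rw [Finset.disjoint_left]; intro x h1 h2
      rw [hQ1, mem_sqg] at h1; rw [hQ4, mem_sqg] at h2; omega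
    have d23 : Disjoint Q₂ Q₃ := by
      rw [Finset.disjoint_left]; intro x h1 h2
      rw [hQ2, mem_sqg] at h1; rw [hQ3, mem_sqg] at h2; omega
    have d24 : Disjoint Q₂ Q₄ := by
      rw [Finset.disjoint_left]; intro x h1 h2
      rw [hQ2, mem_sqg] at h1; rw [hQ4, mem_sqg] at h2; omega
    have d34 : Disjoint Q₃ Q₄ := by
      rw [Finset.disjoint_left]; intro x h1 h2
      rw [hQ3, mem_sqg] at h1; rw [hQ4, mem_sqg] at h2; omega
    -- the four inner-corner cells
    set b₁ : ℤ × ℤ := (v.1 + n - 1, v.2 + n - 1) with hb1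
    set b₂ : ℤ × ℤ := (v.1 + n, v.2 + n - 1) with hb2
    set b₃ : ℤ × ℤ := (v.1 + n - 1, v.2 + n) with hb3
    set b₄ : ℤ × ℤ := (v.1 + n, v.2 + n) with hb4
    have hb1m : b₁ ∈ Q₁ := by rw [hQ1, mem_sqg]; simp [hb1]; omega
    have hb2m : b₂ ∈ Q₂ := by rw [hQ2, mem_sqg]; simp [hb2]; omega
    have hb3m : b₃ ∈ Q₃ := by rw [hQ3, mem_sqg]; simp [hb3]; omega
    have hb4m : b₄ ∈ Q₄ := by rw [hQ4, mem_sqg]; simp [hb4]; omega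
    rw [mem_sqg] at hc
    by_cases hx1 : c.1 < v.1 + n <;> by_cases hx2 : c.2 < v.2 + n
    · -- c ∈ Q₁
      have hcQ : c ∈ Q₁ := by rw [hQ1, mem_sqg]; omega
      have htrom : IsTromino2 ({b₂, b₃, b₄} : Finset (ℤ × ℤ)) := by
        refine ⟨b₄, -1, -1, Or.inr rfl, Or.inr rfl, ?_⟩
        have e2 : b₄ + ((-1 : ℤ), (0 : ℤ)) = b₃ := by simp [hb3, hb4, Prod.ext_iff] <;> omega
        have e3 : b₄ + ((0 : ℤ), (-1 : ℤ)) = b₂ := by simp [hb2, hb4, Prod.ext_iff] <;> omega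
        rw [e2, e3]
        all_goals (ext x; simp <;> tauto)
      obtain ⟨T₁, hT₁⟩ := IH v c (by rw [mem_sqg]; omega)
      obtain ⟨T₂, hT₂⟩ := IH (v.1 + n, v.2) b₂ hb2m
      obtain ⟨T₃, hT₃⟩ := IH (v.1, v.2 + n) b₃ hb3m
      obtain ⟨T₄, hT₄⟩ := IH (v.1 + n, v.2 + n) b₄ hb4m
      exact glue_s12 hsplit d12 d13 d14 d23 d24 d34 hcQ hb2m hb3m hb4m htrom hT₁ hT₂ hT₃ hT₄
    · -- c ∈ Q₃
      have hcQ : c ∈ Q₃ := by rw [hQ3, mem_sqg]; omega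
      have htrom : IsTromino2 ({b₁, b₂, b₄} : Finset (ℤ × ℤ)) := by
        refine ⟨b₂, -1, 1, Or.inr rfl, Or.inl rfl, ?_⟩
        have e2 : b₂ + ((-1 : ℤ), (0 : ℤ)) = b₁ := by simp [hb1, hb2, Prod.ext_iff] <;> omega
        have e3 : b₂ + ((0 : ℤ), (1 : ℤ)) = b₄ := by simp [hb2, hb4, Prod.ext_iff] <;> omega
        rw [e2, e3]
        all_goals (ext x; simp <;> tauto)
      obtain ⟨T₃, hT₃⟩ := IH (v.1, v.2 + n) c (by rw [mem_sqg]; omega)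
      obtain ⟨T₁, hT₁⟩ := IH v b₁ hb1m
      obtain ⟨T₂, hT₂⟩ := IH (v.1 + n, v.2) b₂ hb2m
      obtain ⟨T₄, hT₄⟩ := IH (v.1 + n, v.2 + n) b₄ hb4m
      have hsplit' : ∀ x : ℤ × ℤ, x ∈ sqg (2 * n) v ↔ x ∈ Q₃ ∨ x ∈ Q₁ ∨ x ∈ Q₂ ∨ x ∈ Q₄ :=
        fun x => (hsplit x).trans or_perm3
      exact glue_s12 hsplit' d13.symm d23.symm d34 d12
        d14 d24 hcQ hb1m hb2m hb4m htrom hT₃ hT₁ hT₂ hT₄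
    · -- c ∈ Q₂
      have hcQ : c ∈ Q₂ := by rw [hQ2, mem_sqg]; omega
      have htrom : IsTromino2 ({b₁, b₃, b₄} : Finset (ℤ × ℤ)) := by
        refine ⟨b₃, 1, -1, Or.inl rfl, Or.inr rfl, ?_⟩
        have e2 : b₃ + ((1 : ℤ), (0 : ℤ)) = b₄ := by simp [hb3, hb4, Prod.ext_iff] <;> omega
        have e3 : b₃ + ((0 : ℤ), (-1 : ℤ)) = b₁ := by simp [hb1, hb3, Prod.ext_iff] <;> omega
        rw [e2, e3]
        all_goals (ext x; simp <;> tauto)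
      obtain ⟨T₂, hT₂⟩ := IH (v.1 + n, v.2) c (by rw [mem_sqg]; omega)
      obtain ⟨T₁, hT₁⟩ := IH v b₁ hb1m
      obtain ⟨T₃, hT₃⟩ := IH (v.1, v.2 + n) b₃ hb3m
      obtain ⟨T₄, hT₄⟩ := IH (v.1 + n, v.2 + n) b₄ hb4m
      have hsplit' : ∀ x : ℤ × ℤ, x ∈ sqg (2 * n) v ↔ x ∈ Q₂ ∨ x ∈ Q₁ ∨ x ∈ Q₃ ∨ x ∈ Q₄ :=
        fun x => (hsplit x).trans or_perm2
      exact glue_s12 hsplit' d12.symm d23 d24 d13 d14 d34 hcQ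
        hb1m hb3m hb4m htrom hT₂ hT₁ hT₃ hT₄
    · -- c ∈ Q₄
      have hcQ : c ∈ Q₄ := by rw [hQ4, mem_sqg, hb4]; omega
      have htrom : IsTromino2 ({b₁, b₂, b₃} : Finset (ℤ × ℤ)) := by
        refine ⟨b₁, 1, 1, Or.inl rfl, Or.inl rfl, ?_⟩
        have e2 : b₁ + ((1 : ℤ), (0 : ℤ)) = b₂ := by simp [hb1, hb2, Prod.ext_iff] <;> omega
        have e3 : b₁ + ((0 : ℤ), (1 : ℤ)) = b₃ := by simp [hb1, hb3, Prod.ext_iff] <;> omega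
        rw [e2, e3]
        all_goals (ext x; simp <;> tauto)
      obtain ⟨T₄, hT₄⟩ := IH (v.1 + n, v.2 + n) c (by rw [mem_sqg]; omega)
      obtain ⟨T₁, hT₁⟩ := IH v b₁ hb1m
      obtain ⟨T₂, hT₂⟩ := IH (v.1 + n, v.2) b₂ hb2m
      obtain ⟨T₃, hT₃⟩ := IH (v.1, v.2 + n) b₃ hb3m
      have hsplit' : ∀ x : ℤ × ℤ, x ∈ sqg (2 * n) v ↔ x ∈ Q₄ ∨ x ∈ Q₁ ∨ x ∈ Q₂ ∨ x ∈ Q₃ :=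
        fun x => (hsplit x).trans or_perm4
      exact glue_s12 hsplit' d14.symm d24.symm d34.symm d12
        d13 d23 hcQ hb1m hb2m hb3m htrom hT₄ hT₁ hT₂ hT₃
    
/-- Golomb's theorem: every deficient `2^k × 2^k` grid can be tiled by
planar L-trominoes. -/
theorem tile_deficient_pow_two (k : ℕ) (c : ℤ × ℤ) (hc : c ∈ grid (2 ^ k) (2 ^ k)) :
    ∃ T : Finset (Finset (ℤ × ℤ)), IsTiling2 ((grid (2 ^ k) (2 ^ k)).erase c) T := by
  have hg : grid (2 ^ k) (2 ^ k) = sqg ((2 : ℤ) ^ k) (0, 0) := by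
    ext x
    simp only [grid, mem_sqg, Finset.mem_product, Finset.mem_Ico]
    push_cast
    omega
  rw [hg] at hc ⊢
  exact sqg_tiling k (0, 0) c hc
end

section
/- If a cell (i,j) of the 5×5 grid has i+j odd (with 1-based coordinates, i.e., the cell lies in an even row or even column position under the standard coloring obstruction), then the 5×5 grid with that cell removed cannot be tiled by planar L-trominoes. -/
def Sset : Finset (ℤ × ℤ) :=
  {(0,0),(0,2),(0,4),(2,0),(2,2),(2,4),(4,0),(4,2),(4,4)}

lemma Sset_even {x : ℤ × ℤ} (hx : x ∈ Sset) : Even x.1 ∧ Even x.2 := by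
  fin_cases hx <;> simp <;> decide

lemma tromino_card {t : Finset (ℤ × ℤ)} (h : IsTromino2 t) : t.card = 3 := by
  obtain ⟨c, ε₁, ε₂, h1, h2, rfl⟩ := h
  rcases h1 with rfl | rfl <;> rcases h2 with rfl | rfl <;>
  · rw [Finset.card_insert_of_notMem, Finset.card_insert_of_notMem,
      Finset.card_singleton] <;>
    · simp [Prod.ext_iff]; try omega

lemma tromino_inter_card {t : Finset (ℤ × ℤ)} (h : IsTromino2 t) :
    (t ∩ Sset).card ≤ 1 := by
  obtain ⟨c, ε₁, ε₂, h1, h2, rfl⟩ := h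
  apply Finset.card_le_one.2
  intro a ha b hb
  obtain ⟨ha1, ha2⟩ := Finset.mem_inter.1 ha
  obtain ⟨hb1, hb2⟩ := Finset.mem_inter.1 hb
  obtain ⟨⟨u, hu⟩, ⟨v, hv⟩⟩ := Sset_even ha2
  obtain ⟨⟨w, hw⟩, ⟨z, hz⟩⟩ := Sset_even hb2
  simp only [Finset.mem_insert, Finset.mem_singleton, Prod.ext_iff,
    Prod.fst_add, Prod.snd_add] at ha1 hb1
  have : a.1 = b.1 ∧ a.2 = b.2 := by
    rcases h1 with rfl | rfl <;> rcases h2 with rfl | rfl <;> omega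
  exact Prod.ext this.1 this.2

/-- If the removed cell `(i,j)` of the `5×5` grid (1-based coordinates) has
`i + j` odd, then the deficient grid cannot be tiled by planar L-trominoes. -/
theorem no_tiling_deficient_5 (i j : ℤ) (hi : 1 ≤ i ∧ i ≤ 5) (hj : 1 ≤ j ∧ j ≤ 5)
    (hodd : Odd (i + j)) :
    ¬ ∃ T : Finset (Finset (ℤ × ℤ)),
        IsTiling2 ((grid 5 5).erase (i - 1, j - 1)) T := by
  rintro ⟨T, htrom, hdisj, hcover⟩
  obtain ⟨k, hk⟩ := hodd
  -- Region as a biUnion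
  have hRb : (grid 5 5).erase (i - 1, j - 1) = T.biUnion id := by
    ext x
    simp only [Finset.mem_biUnion, id]
    exact hcover x
  -- card of region = 24
  have hmem : (i - 1, j - 1) ∈ grid 5 5 := by
    simp only [grid, Finset.mem_product, Finset.mem_Ico]
    push_cast
    omega
  have hcardR : ((grid 5 5).erase (i - 1, j - 1)).card = 24 := by
    rw [Finset.card_erase_of_mem hmem]
    have : (grid 5 5).card = 25 := by
      simp [grid, Finset.card_product]
    omega
  -- |T| = 8
  have hsum : (T.biUnion id).card = ∑ t ∈ T, t.card := Finset.card_biUnion hdisj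
  have hsum3 : ∑ t ∈ T, t.card = 3 * T.card := by
    rw [Finset.sum_congr rfl (fun t ht => tromino_card (htrom t ht))]
    simp [mul_comm]
  have hT8 : T.card = 8 := by
    have := hcardR
    rw [hRb, hsum, hsum3] at this
    omega
  -- S ⊆ region
  have hSR : Sset ⊆ (grid 5 5).erase (i - 1, j - 1) := by
    intro x hx
    rw [Finset.mem_erase]
    constructor
    · intro hxe
      obtain ⟨he1, he2⟩ := Sset_even hx
      rw [hxe] at he1 he2
      obtain ⟨u, hu⟩ := he1
      obtain ⟨v, hv⟩ := he2
      simp at hu hv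
      omega
    · fin_cases hx <;> simp [grid]
  -- count
  have hScard : Sset.card = 9 := by decide
  have hSsub : Sset ⊆ T.biUnion (fun t => t ∩ Sset) := by
    intro x hx
    have := hSR hx
    rw [hRb, Finset.mem_biUnion] at this
    obtain ⟨t, ht, hxt⟩ := this
    exact Finset.mem_biUnion.2 ⟨t, ht, Finset.mem_inter.2 ⟨hxt, hx⟩⟩
  have hle : Sset.card ≤ ∑ t ∈ T, (t ∩ Sset).card := by
    calc Sset.card ≤ (T.biUnion (fun t => t ∩ Sset)).card :=
          Finset.card_le_card hSsub
      _ = ∑ t ∈ T, (t ∩ Sset).card := by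
          apply Finset.card_biUnion
          intro x hx y hy hxy
          exact (hdisj x hx y hy hxy).mono Finset.inter_subset_left
            Finset.inter_subset_left
  have hle8 : ∑ t ∈ T, (t ∩ Sset).card ≤ 8 := by
    calc ∑ t ∈ T, (t ∩ Sset).card ≤ ∑ _t ∈ T, 1 :=
          Finset.sum_le_sum (fun t ht => tromino_inter_card (htrom t ht))
      _ = 8 := by simp [hT8]
  omega
end

section
/- For every cell c of the 4×4×4 cube, the cube with c removed can be tiled by three-dimensional trominoes (21 trominoes). -/
lemma addX (a b c : ℤ) : (a,b,c) + (1:ℤ) • e3 0 = (a+1,b,c) := by simp [e3, Prod.ext_iff]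
lemma subX (a b c : ℤ) : (a,b,c) + (-1:ℤ) • e3 0 = (a-1,b,c) := by simp [e3, Prod.ext_iff]; ring
lemma addY (a b c : ℤ) : (a,b,c) + (1:ℤ) • e3 1 = (a,b+1,c) := by simp [e3, Prod.ext_iff]
lemma subY (a b c : ℤ) : (a,b,c) + (-1:ℤ) • e3 1 = (a,b-1,c) := by simp [e3, Prod.ext_iff]; ring
lemma addZ (a b c : ℤ) : (a,b,c) + (1:ℤ) • e3 2 = (a,b,c+1) := by simp [e3, Prod.ext_iff]
lemma subZ (a b c : ℤ) : (a,b,c) + (-1:ℤ) • e3 2 = (a,b,c-1) := by simp [e3, Prod.ext_iff]; ring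

lemma tXpYp (a b c : ℤ) : IsTromino3 {(a,b,c),(a+1,b,c),(a,b+1,c)} :=
  ⟨(a,b,c),0,1,1,1, by decide, Or.inl rfl, Or.inl rfl, by rw [addX, addY]⟩
lemma tXpYm (a b c : ℤ) : IsTromino3 {(a,b,c),(a+1,b,c),(a,b-1,c)} :=
  ⟨(a,b,c),0,1,1,-1, by decide, Or.inl rfl, Or.inr rfl, by rw [addX, subY]⟩
lemma tXmYp (a b c : ℤ) : IsTromino3 {(a,b,c),(a-1,b,c),(a,b+1,c)} :=
  ⟨(a,b,c),0,1,-1,1, by decide, Or.inr rfl, Or.inl rfl, by rw [subX, addY]⟩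
lemma tXmYm (a b c : ℤ) : IsTromino3 {(a,b,c),(a-1,b,c),(a,b-1,c)} :=
  ⟨(a,b,c),0,1,-1,-1, by decide, Or.inr rfl, Or.inr rfl, by rw [subX, subY]⟩
lemma tXpZp (a b c : ℤ) : IsTromino3 {(a,b,c),(a+1,b,c),(a,b,c+1)} :=
  ⟨(a,b,c),0,2,1,1, by decide, Or.inl rfl, Or.inl rfl, by rw [addX, addZ]⟩
lemma tXpZm (a b c : ℤ) : IsTromino3 {(a,b,c),(a+1,b,c),(a,b,c-1)} :=
  ⟨(a,b,c),0,2,1,-1, by decide, Or.inl rfl, Or.inr rfl, by rw [addX, subZ]⟩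
lemma tXmZp (a b c : ℤ) : IsTromino3 {(a,b,c),(a-1,b,c),(a,b,c+1)} :=
  ⟨(a,b,c),0,2,-1,1, by decide, Or.inr rfl, Or.inl rfl, by rw [subX, addZ]⟩
lemma tXmZm (a b c : ℤ) : IsTromino3 {(a,b,c),(a-1,b,c),(a,b,c-1)} :=
  ⟨(a,b,c),0,2,-1,-1, by decide, Or.inr rfl, Or.inr rfl, by rw [subX, subZ]⟩
lemma tYpZp (a b c : ℤ) : IsTromino3 {(a,b,c),(a,b+1,c),(a,b,c+1)} :=
  ⟨(a,b,c),1,2,1,1, by decide, Or.inl rfl, Or.inl rfl, by rw [addY, addZ]⟩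
lemma tYpZm (a b c : ℤ) : IsTromino3 {(a,b,c),(a,b+1,c),(a,b,c-1)} :=
  ⟨(a,b,c),1,2,1,-1, by decide, Or.inl rfl, Or.inr rfl, by rw [addY, subZ]⟩
lemma tYmZp (a b c : ℤ) : IsTromino3 {(a,b,c),(a,b-1,c),(a,b,c+1)} :=
  ⟨(a,b,c),1,2,-1,1, by decide, Or.inr rfl, Or.inl rfl, by rw [subY, addZ]⟩
lemma tYmZm (a b c : ℤ) : IsTromino3 {(a,b,c),(a,b-1,c),(a,b,c-1)} :=
  ⟨(a,b,c),1,2,-1,-1, by decide, Or.inr rfl, Or.inr rfl, by rw [subY, subZ]⟩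

lemma mk_tiling (R : Finset (ℤ × ℤ × ℤ)) (S : List (Finset (ℤ × ℤ × ℤ)))
    (h1 : ∀ t ∈ S, IsTromino3 t)
    (hd : S.Pairwise Disjoint)
    (hc : S.toFinset.card = 21)
    (hu : R = S.toFinset.biUnion id) :
    ∃ T : Finset (Finset (ℤ × ℤ × ℤ)), IsTiling3 R T ∧ T.card = 21 := by
  refine ⟨S.toFinset, ⟨fun t ht => h1 t (List.mem_toFinset.mp ht), ?_, ?_⟩, hc⟩
  · intro t₁ ht₁ t₂ ht₂ hne
    haveI : Std.Symm (α := Finset (ℤ × ℤ × ℤ)) Disjoint := ⟨fun _ _ h => h.symm⟩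
    exact hd.forall (List.mem_toFinset.mp ht₁)
      (List.mem_toFinset.mp ht₂) hne
  · intro x
    rw [hu]
    simp [Finset.mem_biUnion]

def P3cube (c : ℤ × ℤ × ℤ) : Prop :=
  ∃ T : Finset (Finset (ℤ × ℤ × ℤ)), IsTiling3 ((box 4 4 4).erase c) T ∧ T.card = 21

lemma transfer (f : ℤ × ℤ × ℤ → ℤ × ℤ × ℤ) (hf : Function.Injective f)
    (hbox : (box 4 4 4).image f = box 4 4 4)
    (htrom : ∀ s, IsTromino3 s → IsTromino3 (s.image f))
    (c : ℤ × ℤ × ℤ) (h : P3cube c) : P3cube (f c) := by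
  obtain ⟨T, ⟨h1, h2, h3⟩, hcard⟩ := h
  refine ⟨T.image (Finset.image f), ⟨?_, ?_, ?_⟩, ?_⟩
  · intro t ht
    obtain ⟨t₀, ht₀, rfl⟩ := Finset.mem_image.mp ht
    exact htrom t₀ (h1 t₀ ht₀)
  · intro t₁ ht₁ t₂ ht₂ hne
    obtain ⟨s₁, hs₁, rfl⟩ := Finset.mem_image.mp ht₁
    obtain ⟨s₂, hs₂, rfl⟩ := Finset.mem_image.mp ht₂
    have hsne : s₁ ≠ s₂ := fun h => hne (by rw [h])
    exact (Finset.disjoint_image hf).mpr (h2 s₁ hs₁ s₂ hs₂ hsne)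
  · intro x
    rw [← hbox, ← Finset.image_erase hf]
    simp only [Finset.mem_image]
    constructor
    · rintro ⟨y, hy, rfl⟩
      obtain ⟨t, ht, hyt⟩ := (h3 y).mp hy
      exact ⟨t.image f, ⟨t, ht, rfl⟩, Finset.mem_image_of_mem _ hyt⟩
    · rintro ⟨t', ht', hxt'⟩
      obtain ⟨t, ht, rfl⟩ := ht'
      obtain ⟨y, hyt, rfl⟩ := Finset.mem_image.mp hxt'
      exact ⟨y, (h3 y).mpr ⟨t, ht, hyt⟩, rfl⟩
  · rw [Finset.card_image_of_injective _ (Finset.image_injective hf), hcard]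

def r1 (v : ℤ × ℤ × ℤ) : ℤ × ℤ × ℤ := (3 - v.1, v.2.1, v.2.2)
def r2 (v : ℤ × ℤ × ℤ) : ℤ × ℤ × ℤ := (v.1, 3 - v.2.1, v.2.2)
def r3 (v : ℤ × ℤ × ℤ) : ℤ × ℤ × ℤ := (v.1, v.2.1, 3 - v.2.2)

lemma r1_inj : Function.Injective r1 := by
  rintro ⟨a,b,c⟩ ⟨d,e,f⟩ h
  simp only [r1, Prod.ext_iff] at h ⊢
  omega
lemma r2_inj : Function.Injective r2 := by
  rintro ⟨a,b,c⟩ ⟨d,e,f⟩ h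
  simp only [r2, Prod.ext_iff] at h ⊢
  omega
lemma r3_inj : Function.Injective r3 := by
  rintro ⟨a,b,c⟩ ⟨d,e,f⟩ h
  simp only [r3, Prod.ext_iff] at h ⊢
  omega

lemma r1_box : (box 4 4 4).image r1 = box 4 4 4 := by decide
lemma r2_box : (box 4 4 4).image r2 = box 4 4 4 := by decide
lemma r3_box : (box 4 4 4).image r3 = box 4 4 4 := by decide

lemma r1_add (v : ℤ × ℤ × ℤ) (ε : ℤ) (i : Fin 3) :
    r1 (v + ε • e3 i) = r1 v + (if i = 0 then -ε else ε) • e3 i := by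
  fin_cases i <;> simp [r1, e3, Prod.ext_iff] <;> ring
lemma r2_add (v : ℤ × ℤ × ℤ) (ε : ℤ) (i : Fin 3) :
    r2 (v + ε • e3 i) = r2 v + (if i = 1 then -ε else ε) • e3 i := by
  fin_cases i <;> simp [r2, e3, Prod.ext_iff] <;> ring
lemma r3_add (v : ℤ × ℤ × ℤ) (ε : ℤ) (i : Fin 3) :
    r3 (v + ε • e3 i) = r3 v + (if i = 2 then -ε else ε) • e3 i := by
  fin_cases i <;> simp [r3, e3, Prod.ext_iff] <;> ring

lemma sign_flip {ε : ℤ} (h : ε = 1 ∨ ε = -1) (b : Prop) [Decidable b] :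
    (if b then -ε else ε) = 1 ∨ (if b then -ε else ε) = -1 := by
  rcases h with rfl | rfl <;> split <;> simp

lemma r1_trom : ∀ s, IsTromino3 s → IsTromino3 (s.image r1) := by
  rintro s ⟨c, i, j, ε₁, ε₂, hij, h1, h2, rfl⟩
  refine ⟨r1 c, i, j, _, _, hij, sign_flip h1 (i = 0), sign_flip h2 (j = 0), ?_⟩
  simp only [Finset.image_insert, Finset.image_singleton, r1_add]
lemma r2_trom : ∀ s, IsTromino3 s → IsTromino3 (s.image r2) := by
  rintro s ⟨c, i, j, ε₁, ε₂, hij, h1, h2, rfl⟩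
  refine ⟨r2 c, i, j, _, _, hij, sign_flip h1 (i = 1), sign_flip h2 (j = 1), ?_⟩
  simp only [Finset.image_insert, Finset.image_singleton, r2_add]
lemma r3_trom : ∀ s, IsTromino3 s → IsTromino3 (s.image r3) := by
  rintro s ⟨c, i, j, ε₁, ε₂, hij, h1, h2, rfl⟩
  refine ⟨r3 c, i, j, _, _, hij, sign_flip h1 (i = 2), sign_flip h2 (j = 2), ?_⟩
  simp only [Finset.image_insert, Finset.image_singleton, r3_add]

lemma tr1 (x y z a : ℤ) (ha : a = 3 - x) (h : P3cube (x, y, z)) : P3cube (a, y, z) := by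
  subst ha; exact transfer r1 r1_inj r1_box r1_trom (x, y, z) h
lemma tr2 (x y z a : ℤ) (ha : a = 3 - y) (h : P3cube (x, y, z)) : P3cube (x, a, z) := by
  subst ha; exact transfer r2 r2_inj r2_box r2_trom (x, y, z) h
lemma tr3 (x y z a : ℤ) (ha : a = 3 - z) (h : P3cube (x, y, z)) : P3cube (x, y, a) := by
  subst ha; exact transfer r3 r3_inj r3_box r3_trom (x, y, z) h

lemma case_0_0_0 : P3cube (0,0,0) := by
  refine mk_tiling _ [{(0,2,3),(0+1,2,3),(0,2+1,3)}, {(1,3,2),(1+1,3,2),(1,3,2+1)}, {(2,2,3),(2+1,2,3),(2,2+1,3)}, {(3,3,2),(3,3-1,2),(3,3,2+1)}, {(0,2,2),(0+1,2,2),(0,2+1,2)}, {(2,0,3),(2+1,0,3),(2,0+1,3)}, {(3,1,2),(3-1,1,2),(3,1,2+1)}, {(2,0,2),(2+1,0,2),(2,0,2-1)}, {(2,2,1),(2+1,2,1),(2,2,1+1)}, {(2,3,1),(2+1,3,1),(2,3,1-1)}, {(3,2,0),(3-1,2,0),(3,2+1,0)}, {(3,0,0),(3-1,0,0),(3,0,0+1)},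 {(3,1,0),(3-1,1,0),(3,1,0+1)}, {(1,1,1),(1+1,1,1),(1,1+1,1)}, {(1,0,0),(1,0+1,0),(1,0,0+1)}, {(0,1,0),(0,1+1,0),(0,1,0+1)}, {(0,0,2),(0+1,0,2),(0,0,2-1)}, {(1,3,0),(1-1,3,0),(1,3-1,0)}, {(0,3,1),(0+1,3,1),(0,3-1,1)}, {(0,0,3),(0+1,0,3),(0,0+1,3)}, {(1,1,2),(1-1,1,2),(1,1,2+1)}] ?_ (by decide) (by decide) (by decide)
  intro t ht
  simp only [List.mem_cons, List.not_mem_nil, or_false] at ht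
  obtain rfl|rfl|rfl|rfl|rfl|rfl|rfl|rfl|rfl|rfl|rfl|rfl|rfl|rfl|rfl|rfl|rfl|rfl|rfl|rfl|rfl := ht
  exacts [tXpYp 0 2 3, tXpZp 1 3 2, tXpYp 2 2 3, tYmZp 3 3 2, tXpYp 0 2 2, tXpYp 2 0 3, tXmZp 3 1 2, tXpZm 2 0 2, tXpZp 2 2 1, tXpZm 2 3 1, tXmYp 3 2 0, tXmZp 3 0 0, tXmZp 3 1 0, tXpYp 1 1 1, tYpZp 1 0 0, tYpZp 0 1 0, tXpZm 0 0 2, tXmYm 1 3 0, tXpYm 0 3 1, tXpYp 0 0 3, tXmZp 1 1 2]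

lemma case_0_0_1 : P3cube (0,0,1) := by
  refine mk_tiling _ [{(0,0,0),(0+1,0,0),(0,0+1,0)}, {(0,2,3),(0+1,2,3),(0,2+1,3)}, {(1,3,2),(1+1,3,2),(1,3,2+1)}, {(2,2,3),(2+1,2,3),(2,2+1,3)}, {(3,3,2),(3,3-1,2),(3,3,2+1)}, {(0,2,2),(0+1,2,2),(0,2+1,2)}, {(2,0,3),(2+1,0,3),(2,0+1,3)}, {(3,1,2),(3-1,1,2),(3,1,2+1)}, {(2,0,2),(2+1,0,2),(2,0,2-1)}, {(2,2,1),(2+1,2,1),(2,2,1+1)}, {(2,3,1),(2+1,3,1),(2,3,1-1)}, {(3,2,0),(3-1,2,0),(3,2+1,0)}, {(3,0,0),(3-1,0,0),(3,0,0+1)}, {(3,1,0),(3-1,1,0),(3,1,0+1)}, {(1,1,1),(1+1,1,1),(1,1-1,1)}, {(1,2,0),(1-1,2,0),(1,2-1,0)}, {(0,3,0),(0+1,3,0),(0,3,0+1)}, {(1,2,1),(1-1,2,1),(1,2+1,1)}, {(0,1,2),(0+1,1,2),(0,1,2-1)}, {(0,0,2),(0+1,0,2),(0,0,2+1)}, {(1,1,3),(1-1,1,3),(1,1-1,3)}]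 ?_ (by decide) (by decide) (by decide)
  intro t ht
  simp only [List.mem_cons, List.not_mem_nil, or_false] at ht
  obtain rfl|rfl|rfl|rfl|rfl|rfl|rfl|rfl|rfl|rfl|rfl|rfl|rfl|rfl|rfl|rfl|rfl|rfl|rfl|rfl|rfl := ht
  exacts [tXpYp 0 0 0, tXpYp 0 2 3, tXpZp 1 3 2, tXpYp 2 2 3, tYmZp 3 3 2, tXpYp 0 2 2, tXpYp 2 0 3, tXmZp 3 1 2, tXpZm 2 0 2, tXpZp 2 2 1, tXpZm 2 3 1, tXmYp 3 2 0, tXmZp 3 0 0, tXmZp 3 1 0, tXpYm 1 1 1, tXmYm 1 2 0, tXpZp 0 3 0, tXmYp 1 2 1, tXpZm 0 1 2, tXpZp 0 0 2, tXmYm 1 1 3]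

lemma case_0_1_0 : P3cube (0,1,0) := by
  refine mk_tiling _ [{(0,0,0),(0+1,0,0),(0,0,0+1)}, {(0,2,3),(0+1,2,3),(0,2+1,3)}, {(1,3,2),(1+1,3,2),(1,3,2+1)}, {(2,2,3),(2+1,2,3),(2,2+1,3)}, {(3,3,2),(3,3-1,2),(3,3,2+1)}, {(0,2,2),(0+1,2,2),(0,2+1,2)}, {(2,0,3),(2+1,0,3),(2,0+1,3)}, {(3,1,2),(3-1,1,2),(3,1,2+1)}, {(2,0,2),(2+1,0,2),(2,0,2-1)}, {(2,2,1),(2+1,2,1),(2,2,1+1)}, {(2,3,1),(2+1,3,1),(2,3,1-1)}, {(3,2,0),(3-1,2,0),(3,2+1,0)}, {(3,0,0),(3-1,0,0),(3,0,0+1)}, {(3,1,0),(3-1,1,0),(3,1,0+1)}, {(1,1,1),(1+1,1,1),(1,1-1,1)}, {(1,2,0),(1-1,2,0),(1,2-1,0)}, {(0,3,0),(0+1,3,0),(0,3,0+1)}, {(1,2,1),(1-1,2,1),(1,2+1,1)}, {(0,1,2),(0+1,1,2),(0,1,2-1)}, {(0,0,2),(0+1,0,2),(0,0,2+1)}, {(1,1,3),(1-1,1,3),(1,1-1,3)}]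 ?_ (by decide) (by decide) (by decide)
  intro t ht
  simp only [List.mem_cons, List.not_mem_nil, or_false] at ht
  obtain rfl|rfl|rfl|rfl|rfl|rfl|rfl|rfl|rfl|rfl|rfl|rfl|rfl|rfl|rfl|rfl|rfl|rfl|rfl|rfl|rfl := ht
  exacts [tXpZp 0 0 0, tXpYp 0 2 3, tXpZp 1 3 2, tXpYp 2 2 3, tYmZp 3 3 2, tXpYp 0 2 2, tXpYp 2 0 3, tXmZp 3 1 2, tXpZm 2 0 2, tXpZp 2 2 1, tXpZm 2 3 1, tXmYp 3 2 0, tXmZp 3 0 0, tXmZp 3 1 0, tXpYm 1 1 1, tXmYm 1 2 0, tXpZp 0 3 0, tXmYp 1 2 1, tXpZm 0 1 2, tXpZp 0 0 2, tXmYm 1 1 3]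

lemma case_0_1_1 : P3cube (0,1,1) := by
  refine mk_tiling _ [{(0,0,0),(0+1,0,0),(0,0+1,0)}, {(0,0,1),(0+1,0,1),(0,0,1+1)}, {(0,0,3),(0+1,0,3),(0,0+1,3)}, {(1,0,2),(1+1,0,2),(1,0+1,2)}, {(0,2,2),(0+1,2,2),(0,2-1,2)}, {(0,2,3),(0+1,2,3),(0,2+1,3)}, {(2,1,3),(2-1,1,3),(2,1+1,3)}, {(3,0,3),(3-1,0,3),(3,0+1,3)}, {(1,3,2),(1+1,3,2),(1,3,2+1)}, {(3,3,3),(3-1,3,3),(3,3-1,3)}, {(0,3,1),(0+1,3,1),(0,3,1+1)}, {(0,2,0),(0+1,2,0),(0,2+1,0)}, {(1,2,1),(1-1,2,1),(1,2-1,1)}, {(2,3,0),(2-1,3,0),(2,3-1,0)}, {(2,1,0),(2-1,1,0),(2,1-1,0)}, {(3,0,0),(3,0+1,0),(3,0,0+1)}, {(2,1,1),(2+1,1,1),(2,1-1,1)}, {(3,1,2),(3-1,1,2),(3,1-1,2)}, {(3,2,0),(3,2+1,0),(3,2,0+1)}, {(3,2,2),(3-1,2,2),(3,2+1,2)}, {(2,3,1),(2+1,3,1),(2,3-1,1)}]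 ?_ (by decide) (by decide) (by decide)
  intro t ht
  simp only [List.mem_cons, List.not_mem_nil, or_false] at ht
  obtain rfl|rfl|rfl|rfl|rfl|rfl|rfl|rfl|rfl|rfl|rfl|rfl|rfl|rfl|rfl|rfl|rfl|rfl|rfl|rfl|rfl := ht
  exacts [tXpYp 0 0 0, tXpZp 0 0 1, tXpYp 0 0 3, tXpYp 1 0 2, tXpYm 0 2 2, tXpYp 0 2 3, tXmYp 2 1 3, tXmYp 3 0 3, tXpZp 1 3 2, tXmYm 3 3 3, tXpZp 0 3 1, tXpYp 0 2 0, tXmYm 1 2 1, tXmYm 2 3 0, tXmYm 2 1 0, tYpZp 3 0 0, tXpYm 2 1 1, tXmYm 3 1 2, tYpZp 3 2 0, tXmYp 3 2 2, tXpYm 2 3 1]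

lemma case_1_0_0 : P3cube (1,0,0) := by
  refine mk_tiling _ [{(0,0,0),(0,0+1,0),(0,0,0+1)}, {(0,2,3),(0+1,2,3),(0,2+1,3)}, {(1,3,2),(1+1,3,2),(1,3,2+1)}, {(2,2,3),(2+1,2,3),(2,2+1,3)}, {(3,3,2),(3,3-1,2),(3,3,2+1)}, {(0,2,2),(0+1,2,2),(0,2+1,2)}, {(2,0,3),(2+1,0,3),(2,0+1,3)}, {(3,1,2),(3-1,1,2),(3,1,2+1)}, {(2,0,2),(2+1,0,2),(2,0,2-1)}, {(2,2,1),(2+1,2,1),(2,2,1+1)}, {(2,3,1),(2+1,3,1),(2,3,1-1)}, {(3,2,0),(3-1,2,0),(3,2+1,0)}, {(3,0,0),(3-1,0,0),(3,0,0+1)}, {(3,1,0),(3-1,1,0),(3,1,0+1)}, {(1,1,1),(1+1,1,1),(1,1-1,1)}, {(1,2,0),(1-1,2,0),(1,2-1,0)}, {(0,3,0),(0+1,3,0),(0,3,0+1)}, {(1,2,1),(1-1,2,1),(1,2+1,1)}, {(0,1,2),(0+1,1,2),(0,1,2-1)}, {(0,0,2),(0+1,0,2),(0,0,2+1)}, {(1,1,3),(1-1,1,3),(1,1-1,3)}]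 ?_ (by decide) (by decide) (by decide)
  intro t ht
  simp only [List.mem_cons, List.not_mem_nil, or_false] at ht
  obtain rfl|rfl|rfl|rfl|rfl|rfl|rfl|rfl|rfl|rfl|rfl|rfl|rfl|rfl|rfl|rfl|rfl|rfl|rfl|rfl|rfl := ht
  exacts [tYpZp 0 0 0, tXpYp 0 2 3, tXpZp 1 3 2, tXpYp 2 2 3, tYmZp 3 3 2, tXpYp 0 2 2, tXpYp 2 0 3, tXmZp 3 1 2, tXpZm 2 0 2, tXpZp 2 2 1, tXpZm 2 3 1, tXmYp 3 2 0, tXmZp 3 0 0, tXmZp 3 1 0, tXpYm 1 1 1, tXmYm 1 2 0, tXpZp 0 3 0, tXmYp 1 2 1, tXpZm 0 1 2, tXpZp 0 0 2, tXmYm 1 1 3]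

lemma case_1_0_1 : P3cube (1,0,1) := by
  refine mk_tiling _ [{(0,0,0),(0+1,0,0),(0,0+1,0)}, {(0,0,1),(0,0+1,1),(0,0,1+1)}, {(0,0,3),(0+1,0,3),(0,0+1,3)}, {(1,0,2),(1+1,0,2),(1,0+1,2)}, {(0,2,2),(0+1,2,2),(0,2-1,2)}, {(0,2,3),(0+1,2,3),(0,2+1,3)}, {(2,1,3),(2-1,1,3),(2,1+1,3)}, {(3,0,3),(3-1,0,3),(3,0+1,3)}, {(1,3,2),(1+1,3,2),(1,3,2+1)}, {(3,3,3),(3-1,3,3),(3,3-1,3)}, {(0,3,1),(0+1,3,1),(0,3,1+1)}, {(0,2,0),(0+1,2,0),(0,2+1,0)}, {(1,2,1),(1-1,2,1),(1,2-1,1)}, {(2,3,0),(2-1,3,0),(2,3-1,0)}, {(2,1,0),(2-1,1,0),(2,1-1,0)}, {(3,0,0),(3,0+1,0),(3,0,0+1)}, {(2,1,1),(2+1,1,1),(2,1-1,1)}, {(3,1,2),(3-1,1,2),(3,1-1,2)}, {(3,2,0),(3,2+1,0),(3,2,0+1)}, {(3,2,2),(3-1,2,2),(3,2+1,2)}, {(2,3,1),(2+1,3,1),(2,3-1,1)}]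 ?_ (by decide) (by decide) (by decide)
  intro t ht
  simp only [List.mem_cons, List.not_mem_nil, or_false] at ht
  obtain rfl|rfl|rfl|rfl|rfl|rfl|rfl|rfl|rfl|rfl|rfl|rfl|rfl|rfl|rfl|rfl|rfl|rfl|rfl|rfl|rfl := ht
  exacts [tXpYp 0 0 0, tYpZp 0 0 1, tXpYp 0 0 3, tXpYp 1 0 2, tXpYm 0 2 2, tXpYp 0 2 3, tXmYp 2 1 3, tXmYp 3 0 3, tXpZp 1 3 2, tXmYm 3 3 3, tXpZp 0 3 1, tXpYp 0 2 0, tXmYm 1 2 1, tXmYm 2 3 0, tXmYm 2 1 0, tYpZp 3 0 0, tXpYm 2 1 1, tXmYm 3 1 2, tYpZp 3 2 0, tXmYp 3 2 2, tXpYm 2 3 1]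

lemma case_1_1_0 : P3cube (1,1,0) := by
  refine mk_tiling _ [{(0,0,0),(0+1,0,0),(0,0+1,0)}, {(0,2,3),(0+1,2,3),(0,2+1,3)}, {(1,3,2),(1+1,3,2),(1,3,2+1)}, {(2,2,3),(2+1,2,3),(2,2+1,3)}, {(3,3,2),(3,3-1,2),(3,3,2+1)}, {(0,2,2),(0+1,2,2),(0,2+1,2)}, {(0,0,1),(0+1,0,1),(0,0+1,1)}, {(2,0,3),(2+1,0,3),(2,0+1,3)}, {(3,1,2),(3-1,1,2),(3,1,2+1)}, {(2,0,2),(2+1,0,2),(2,0,2-1)}, {(2,2,1),(2+1,2,1),(2,2,1+1)}, {(3,3,0),(3-1,3,0),(3,3,0+1)}, {(1,3,1),(1+1,3,1),(1,3-1,1)}, {(2,2,0),(2+1,2,0),(2,2-1,0)}, {(3,0,0),(3-1,0,0),(3,0+1,0)}, {(3,1,1),(3-1,1,1),(3,1-1,1)}, {(1,1,2),(1-1,1,2),(1,1,2-1)}, {(0,3,0),(0+1,3,0),(0,3,0+1)}, {(0,2,0),(0+1,2,0),(0,2,0+1)}, {(0,0,2),(0+1,0,2),(0,0,2+1)}, {(1,1,3),(1-1,1,3),(1,1-1,3)}]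 ?_ (by decide) (by decide) (by decide)
  intro t ht
  simp only [List.mem_cons, List.not_mem_nil, or_false] at ht
  obtain rfl|rfl|rfl|rfl|rfl|rfl|rfl|rfl|rfl|rfl|rfl|rfl|rfl|rfl|rfl|rfl|rfl|rfl|rfl|rfl|rfl := ht
  exacts [tXpYp 0 0 0, tXpYp 0 2 3, tXpZp 1 3 2, tXpYp 2 2 3, tYmZp 3 3 2, tXpYp 0 2 2, tXpYp 0 0 1, tXpYp 2 0 3, tXmZp 3 1 2, tXpZm 2 0 2, tXpZp 2 2 1, tXmZp 3 3 0, tXpYm 1 3 1, tXpYm 2 2 0, tXmYp 3 0 0, tXmYm 3 1 1, tXmZm 1 1 2, tXpZp 0 3 0, tXpZp 0 2 0, tXpZp 0 0 2, tXmYm 1 1 3]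

lemma case_1_1_1 : P3cube (1,1,1) := by
  refine mk_tiling _ [{(0,2,3),(0+1,2,3),(0,2+1,3)}, {(1,3,2),(1+1,3,2),(1,3,2+1)}, {(2,2,3),(2+1,2,3),(2,2+1,3)}, {(3,3,2),(3,3-1,2),(3,3,2+1)}, {(0,2,2),(0+1,2,2),(0,2+1,2)}, {(2,0,3),(2+1,0,3),(2,0+1,3)}, {(3,1,2),(3-1,1,2),(3,1,2+1)}, {(2,0,2),(2+1,0,2),(2,0,2-1)}, {(2,2,1),(2+1,2,1),(2,2,1+1)}, {(2,3,1),(2+1,3,1),(2,3,1-1)}, {(3,2,0),(3-1,2,0),(3,2+1,0)}, {(3,0,0),(3-1,0,0),(3,0,0+1)}, {(3,1,1),(3-1,1,1),(3,1,1-1)}, {(1,1,0),(1+1,1,0),(1,1+1,0)}, {(0,0,0),(0+1,0,0),(0,0+1,0)}, {(0,3,0),(0+1,3,0),(0,3-1,0)}, {(1,3,1),(1-1,3,1),(1,3-1,1)}, {(0,1,1),(0,1+1,1),(0,1,1+1)}, {(0,0,1),(0+1,0,1),(0,0,1+1)}, {(0,0,3),(0+1,0,3),(0,0+1,3)}, {(1,1,2),(1,1-1,2),(1,1,2+1)}]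 ?_ (by decide) (by decide) (by decide)
  intro t ht
  simp only [List.mem_cons, List.not_mem_nil, or_false] at ht
  obtain rfl|rfl|rfl|rfl|rfl|rfl|rfl|rfl|rfl|rfl|rfl|rfl|rfl|rfl|rfl|rfl|rfl|rfl|rfl|rfl|rfl := ht
  exacts [tXpYp 0 2 3, tXpZp 1 3 2, tXpYp 2 2 3, tYmZp 3 3 2, tXpYp 0 2 2, tXpYp 2 0 3, tXmZp 3 1 2, tXpZm 2 0 2, tXpZp 2 2 1, tXpZm 2 3 1, tXmYp 3 2 0, tXmZp 3 0 0, tXmZm 3 1 1, tXpYp 1 1 0, tXpYp 0 0 0, tXpYm 0 3 0, tXmYm 1 3 1, tYpZp 0 1 1, tXpZp 0 0 1, tXpYp 0 0 3, tYmZp 1 1 2]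

/-- Every singly deficient `4×4×4` cube can be tiled by 21 3D trominoes. -/
theorem tile_deficient_cube_4 (c : ℤ × ℤ × ℤ) (hc : c ∈ box 4 4 4) :
    ∃ T : Finset (Finset (ℤ × ℤ × ℤ)),
      IsTiling3 ((box 4 4 4).erase c) T ∧ T.card = 21 := by
  obtain ⟨x, y, z⟩ := c
  simp only [box, Finset.mem_product, Finset.mem_Ico] at hc
  obtain ⟨⟨hx0, hx1⟩, ⟨hy0, hy1⟩, ⟨hz0, hz1⟩⟩ := hc
  have hx1' : x ≤ 3 := by omega
  have hy1' : y ≤ 3 := by omega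
  have hz1' : z ≤ 3 := by omega
  show P3cube (x, y, z)
  interval_cases x <;> interval_cases y <;> interval_cases z
  · exact case_0_0_0
  · exact case_0_0_1
  · exact (tr3 0 0 1 2 (by norm_num) case_0_0_1)
  · exact (tr3 0 0 0 3 (by norm_num) case_0_0_0)
  · exact case_0_1_0
  · exact case_0_1_1
  · exact (tr3 0 1 1 2 (by norm_num) case_0_1_1)
  · exact (tr3 0 1 0 3 (by norm_num) case_0_1_0)
  · exact (tr2 0 1 0 2 (by norm_num) case_0_1_0)
  · exact (tr2 0 1 1 2 (by norm_num) case_0_1_1)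
  · exact (tr2 0 1 2 2 (by norm_num) (tr3 0 1 1 2 (by norm_num) case_0_1_1))
  · exact (tr2 0 1 3 2 (by norm_num) (tr3 0 1 0 3 (by norm_num) case_0_1_0))
  · exact (tr2 0 0 0 3 (by norm_num) case_0_0_0)
  · exact (tr2 0 0 1 3 (by norm_num) case_0_0_1)
  · exact (tr2 0 0 2 3 (by norm_num) (tr3 0 0 1 2 (by norm_num) case_0_0_1))
  · exact (tr2 0 0 3 3 (by norm_num) (tr3 0 0 0 3 (by norm_num) case_0_0_0))
  · exact case_1_0_0
  · exact case_1_0_1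
  · exact (tr3 1 0 1 2 (by norm_num) case_1_0_1)
  · exact (tr3 1 0 0 3 (by norm_num) case_1_0_0)
  · exact case_1_1_0
  · exact case_1_1_1
  · exact (tr3 1 1 1 2 (by norm_num) case_1_1_1)
  · exact (tr3 1 1 0 3 (by norm_num) case_1_1_0)
  · exact (tr2 1 1 0 2 (by norm_num) case_1_1_0)
  · exact (tr2 1 1 1 2 (by norm_num) case_1_1_1)
  · exact (tr2 1 1 2 2 (by norm_num) (tr3 1 1 1 2 (by norm_num) case_1_1_1))
  · exact (tr2 1 1 3 2 (by norm_num) (tr3 1 1 0 3 (by norm_num) case_1_1_0))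
  · exact (tr2 1 0 0 3 (by norm_num) case_1_0_0)
  · exact (tr2 1 0 1 3 (by norm_num) case_1_0_1)
  · exact (tr2 1 0 2 3 (by norm_num) (tr3 1 0 1 2 (by norm_num) case_1_0_1))
  · exact (tr2 1 0 3 3 (by norm_num) (tr3 1 0 0 3 (by norm_num) case_1_0_0))
  · exact (tr1 1 0 0 2 (by norm_num) case_1_0_0)
  · exact (tr1 1 0 1 2 (by norm_num) case_1_0_1)
  · exact (tr1 1 0 2 2 (by norm_num) (tr3 1 0 1 2 (by norm_num) case_1_0_1))
  · exact (tr1 1 0 3 2 (by norm_num) (tr3 1 0 0 3 (by norm_num) case_1_0_0))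
  · exact (tr1 1 1 0 2 (by norm_num) case_1_1_0)
  · exact (tr1 1 1 1 2 (by norm_num) case_1_1_1)
  · exact (tr1 1 1 2 2 (by norm_num) (tr3 1 1 1 2 (by norm_num) case_1_1_1))
  · exact (tr1 1 1 3 2 (by norm_num) (tr3 1 1 0 3 (by norm_num) case_1_1_0))
  · exact (tr1 1 2 0 2 (by norm_num) (tr2 1 1 0 2 (by norm_num) case_1_1_0))
  · exact (tr1 1 2 1 2 (by norm_num) (tr2 1 1 1 2 (by norm_num) case_1_1_1))
  · exact (tr1 1 2 2 2 (by norm_num) (tr2 1 1 2 2 (by norm_num) (tr3 1 1 1 2 (by norm_num) case_1_1_1)))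
  · exact (tr1 1 2 3 2 (by norm_num) (tr2 1 1 3 2 (by norm_num) (tr3 1 1 0 3 (by norm_num) case_1_1_0)))
  · exact (tr1 1 3 0 2 (by norm_num) (tr2 1 0 0 3 (by norm_num) case_1_0_0))
  · exact (tr1 1 3 1 2 (by norm_num) (tr2 1 0 1 3 (by norm_num) case_1_0_1))
  · exact (tr1 1 3 2 2 (by norm_num) (tr2 1 0 2 3 (by norm_num) (tr3 1 0 1 2 (by norm_num) case_1_0_1)))
  · exact (tr1 1 3 3 2 (by norm_num) (tr2 1 0 3 3 (by norm_num) (tr3 1 0 0 3 (by norm_num) case_1_0_0)))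
  · exact (tr1 0 0 0 3 (by norm_num) case_0_0_0)
  · exact (tr1 0 0 1 3 (by norm_num) case_0_0_1)
  · exact (tr1 0 0 2 3 (by norm_num) (tr3 0 0 1 2 (by norm_num) case_0_0_1))
  · exact (tr1 0 0 3 3 (by norm_num) (tr3 0 0 0 3 (by norm_num) case_0_0_0))
  · exact (tr1 0 1 0 3 (by norm_num) case_0_1_0)
  · exact (tr1 0 1 1 3 (by norm_num) case_0_1_1)
  · exact (tr1 0 1 2 3 (by norm_num) (tr3 0 1 1 2 (by norm_num) case_0_1_1))
  · exact (tr1 0 1 3 3 (by norm_num) (tr3 0 1 0 3 (by norm_num) case_0_1_0))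
  · exact (tr1 0 2 0 3 (by norm_num) (tr2 0 1 0 2 (by norm_num) case_0_1_0))
  · exact (tr1 0 2 1 3 (by norm_num) (tr2 0 1 1 2 (by norm_num) case_0_1_1))
  · exact (tr1 0 2 2 3 (by norm_num) (tr2 0 1 2 2 (by norm_num) (tr3 0 1 1 2 (by norm_num) case_0_1_1)))
  · exact (tr1 0 2 3 3 (by norm_num) (tr2 0 1 3 2 (by norm_num) (tr3 0 1 0 3 (by norm_num) case_0_1_0)))
  · exact (tr1 0 3 0 3 (by norm_num) (tr2 0 0 0 3 (by norm_num) case_0_0_0))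
  · exact (tr1 0 3 1 3 (by norm_num) (tr2 0 0 1 3 (by norm_num) case_0_0_1))
  · exact (tr1 0 3 2 3 (by norm_num) (tr2 0 0 2 3 (by norm_num) (tr3 0 0 1 2 (by norm_num) case_0_0_1)))
  · exact (tr1 0 3 3 3 (by norm_num) (tr2 0 0 3 3 (by norm_num) (tr3 0 0 0 3 (by norm_num) case_0_0_0)))
end
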